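/- If y ∈ U_w = R_w B and b_+ = nt ∈ B_+ = N_0 T_+, and if x = t^{-1} n^{-1} y lies in U_{w'} = R_{w'} B, then w' ⪯ w in the strong Bruhat order on S_n. -/

import Mathlib

open Matrix

variable (p : ℕ) [Fact p.Prime] (F : Type) [Field F] [Algebra ℚ_[p] F]
  [FiniteDimensional ℚ_[p] F] [Algebra ℤ_[p] F] [IsScalarTower ℤ_[p] ℚ_[p] F]

/-- The ring of integers `o_F` of the finite extension `F` of `ℚ_p`. -/
def oF : Set F := {x | x ∈ integralClosure ℤ_[p] F}

/-- The ideal `π_F o_F` of `o_F`, as a subset of `F`. -/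
def piO (π : F) : Set F := {x | ∃ c ∈ oF p F, x = π * c}

/-- The permutation matrix of `w`, with `w_{ij} = 1` iff `w(j) = i`. -/
def permMat (n : ℕ) (w : Equiv.Perm (Fin n)) : Matrix (Fin n) (Fin n) F :=
  fun i j => if w j = i then 1 else 0

/-- `R_w`: the set of matrices `(a_{ij})` with `a_{ij} = 1` if `w⁻¹(i) = j`,
`a_{ij} = 0` if `w⁻¹(i) < j`, `a_{ij} ∈ o_F` if `w⁻¹(i) > j` and `w(j) > i`, and
`a_{ij} ∈ π_F o_F` if `w⁻¹(i) > j` and `w(j) < i`. -/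
def Rw (π : F) (n : ℕ) (w : Equiv.Perm (Fin n)) : Set (Matrix (Fin n) (Fin n) F) :=
  {a | ∀ i j : Fin n,
    (w⁻¹ i = j → a i j = 1) ∧
    (w⁻¹ i < j → a i j = 0) ∧
    (j < w⁻¹ i → i < w j → a i j ∈ oF p F) ∧
    (j < w⁻¹ i → w j < i → a i j ∈ piO p F π)}

/-- invertible upper triangular matrix (an element of the Borel `B`). -/
def IsBorel {n : ℕ} (b : Matrix (Fin n) (Fin n) F) : Prop :=
  (∀ i j : Fin n, j < i → b i j = 0) ∧ (∀ i : Fin n, b i i ≠ 0)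

/-- membership in `N₀`: upper triangular unipotent with entries in `o_F`. -/
def IsN0 {n : ℕ} (m : GL (Fin n) F) : Prop :=
  (∀ i : Fin n, (↑m : Matrix (Fin n) (Fin n) F) i i = 1) ∧
  (∀ i j : Fin n, j < i → (↑m : Matrix (Fin n) (Fin n) F) i j = 0) ∧
  (∀ i j : Fin n, (↑m : Matrix (Fin n) (Fin n) F) i j ∈ oF p F)

/-- `T₊ = {t ∈ T : t N₀ t⁻¹ ⊆ N₀}`. -/
def Tplus (n : ℕ) : Set (GL (Fin n) F) :=
  {t | (∀ i j : Fin n, i ≠ j → (↑t : Matrix (Fin n) (Fin n) F) i j = 0) ∧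
    ∀ m : GL (Fin n) F, IsN0 p F m → IsN0 p F (t * m * t⁻¹)}

/-- `U_w = R_w B`. -/
def RwB (π : F) (n : ℕ) (w : Equiv.Perm (Fin n)) : Set (Matrix (Fin n) (Fin n) F) :=
  {x | ∃ r b : Matrix (Fin n) (Fin n) F, r ∈ Rw p F π n w ∧ IsBorel F b ∧ x = r * b}

/-- The length of a permutation: its number of inversions. -/
def len {n : ℕ} (w : Equiv.Perm (Fin n)) : ℕ :=
  Finset.card (Finset.univ.filter (fun q : Fin n × Fin n => q.1 < q.2 ∧ w q.2 < w q.1))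

/-- The strong Bruhat order on `Sₙ`: `w' ⪯ w` iff there are transpositions
`t₁,…,t_k` with `w' = w t₁ ⋯ t_k` and strictly decreasing lengths
`ℓ(w) > ℓ(w t₁) > ⋯ > ℓ(w t₁ ⋯ t_k)`. -/
def BruhatLE {n : ℕ} (w' w : Equiv.Perm (Fin n)) : Prop :=
  ∃ L : List (Equiv.Perm (Fin n)),
    (∀ t ∈ L, ∃ a b : Fin n, a ≠ b ∧ t = Equiv.swap a b) ∧
    w' = w * L.prod ∧
    ∀ k < L.length, len (w * (L.take (k + 1)).prod) < len (w * (L.take k).prod)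


namespace S12

variable {F : Type*} [Field F]

/-- fractional ideal powers: `π^k O`. -/
def Ms (O : Subring F) (π : F) (k : ℤ) : Set F := {x | ∃ c ∈ O, x = π ^ k * c}

/-- The axioms we need on the pair `(O, π)`. -/
structure Good (O : Subring F) (π : F) : Prop where
  pi0 : π ≠ 0
  piO : π ∈ O
  pinv : π⁻¹ ∉ O
  ex : ∀ x : F, x ≠ 0 → ∃ (m : ℤ) (u : F), u ∈ O ∧ u⁻¹ ∈ O ∧ x = u * π ^ m

variable {O : Subring F} {π : F}

lemma Ms_zero (k : ℤ) : (0 : F) ∈ Ms O π k := ⟨0, zero_mem _, by ring⟩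

lemma Ms_add {x y : F} {k : ℤ} (hx : x ∈ Ms O π k) (hy : y ∈ Ms O π k) :
    x + y ∈ Ms O π k := by
  obtain ⟨c, hc, rfl⟩ := hx; obtain ⟨d, hd, rfl⟩ := hy
  exact ⟨c + d, add_mem hc hd, by ring⟩

lemma Ms_mul {x y : F} {k l : ℤ} (hG : Good O π) (hx : x ∈ Ms O π k) (hy : y ∈ Ms O π l) :
    x * y ∈ Ms O π (k + l) := by
  obtain ⟨c, hc, rfl⟩ := hx; obtain ⟨d, hd, rfl⟩ := hy
  exact ⟨c * d, mul_mem hc hd, by rw [zpow_add₀ hG.pi0]; ring⟩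

lemma Ms_of_O {x : F} (hx : x ∈ O) : x ∈ Ms O π 0 := ⟨x, hx, by simp⟩

lemma O_of_Ms {x : F} (hx : x ∈ Ms O π 0) : x ∈ O := by
  obtain ⟨c, hc, rfl⟩ := hx; simpa using hc

lemma Ms_mono (hG : Good O π) {k l : ℤ} (h : l ≤ k) : Ms O π k ⊆ Ms O π l := by
  rintro x ⟨c, hc, rfl⟩
  refine ⟨π ^ (k - l) * c, mul_mem ?_ hc, ?_⟩
  · rw [show k - l = ((k - l).toNat : ℤ) by omega, zpow_natCast]
    exact pow_mem hG.piO _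
  · rw [← mul_assoc, ← zpow_add₀ hG.pi0]; ring_nf

lemma Ms_pi_shift {x : F} {k : ℤ} (hG : Good O π) (e : ℤ) (hx : x ∈ Ms O π k) :
    π ^ e * x ∈ Ms O π (e + k) := by
  obtain ⟨c, hc, rfl⟩ := hx
  exact ⟨c, hc, by rw [zpow_add₀ hG.pi0]; ring⟩

/-- key: a "unit" (u and u⁻¹ in O, u ≠ 0) times `π^m` is in `Ms m` but not `Ms (m+1)`. -/
lemma unit_pi_mem {u : F} (hu : u ∈ O) (m : ℤ) :
    u * π ^ m ∈ Ms O π m := ⟨u, hu, by ring⟩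

lemma unit_pi_not_mem (hG : Good O π) {u : F} (hu0 : u ≠ 0) (hui : u⁻¹ ∈ O) (m : ℤ) :
    u * π ^ m ∉ Ms O π (m + 1) := by
  rintro ⟨c, hc, heq⟩
  have hπm : (π : F) ^ m ≠ 0 := zpow_ne_zero _ hG.pi0
  have h1 : u = π * c := by
    have h2 : π ^ m * u = π ^ m * (π * c) := by
      rw [mul_comm (π ^ m) u, heq, zpow_add₀ hG.pi0, zpow_one]; ring
    exact mul_left_cancel₀ hπm h2
  have h3 : π * (c * u⁻¹) = 1 := by
    rw [← mul_assoc, ← h1, mul_inv_cancel₀ hu0]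
  exact hG.pinv ((inv_eq_of_mul_eq_one_right h3) ▸ mul_mem hc hui)

open Classical in
noncomputable def vv (O : Subring F) (π : F) (x : F) : ℤ :=
  if h : ∃ m : ℤ, x ∈ Ms O π m ∧ x ∉ Ms O π (m + 1) then h.choose else 0

lemma vv_ex (hG : Good O π) {x : F} (hx : x ≠ 0) :
    ∃ m : ℤ, x ∈ Ms O π m ∧ x ∉ Ms O π (m + 1) := by
  obtain ⟨m, u, hu, hui, rfl⟩ := hG.ex x hx
  have hu0 : u ≠ 0 := fun h => hx (by simp [h])
  exact ⟨m, unit_pi_mem hu m, unit_pi_not_mem hG hu0 hui m⟩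

lemma vv_eq (hG : Good O π) {x : F} {m : ℤ} (h1 : x ∈ Ms O π m) (h2 : x ∉ Ms O π (m + 1)) :
    vv O π x = m := by
  classical
  have hd : ∃ m : ℤ, x ∈ Ms O π m ∧ x ∉ Ms O π (m + 1) := ⟨m, h1, h2⟩
  rw [vv, dif_pos hd]
  obtain ⟨hm1, hm2⟩ := hd.choose_spec
  rcases lt_trichotomy hd.choose m with h | h | h
  · exact absurd (Ms_mono hG (by omega) h1) hm2
  · exact h
  · exact absurd (Ms_mono hG (by omega) hm1) h2

lemma vv_spec (hG : Good O π) {x : F} (hx : x ≠ 0) :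
    x ∈ Ms O π (vv O π x) ∧ x ∉ Ms O π (vv O π x + 1) := by
  obtain ⟨m, h1, h2⟩ := vv_ex hG hx
  rw [vv_eq hG h1 h2]; exact ⟨h1, h2⟩

lemma mem_Ms_iff (hG : Good O π) {x : F} (hx : x ≠ 0) {k : ℤ} :
    x ∈ Ms O π k ↔ k ≤ vv O π x := by
  constructor
  · intro h
    by_contra hlt
    exact (vv_spec hG hx).2 (Ms_mono hG (by omega) h)
  · intro h
    exact Ms_mono hG h (vv_spec hG hx).1

lemma vv_unit_pi (hG : Good O π) {u : F} (hu : u ∈ O) (hu0 : u ≠ 0) (hui : u⁻¹ ∈ O) (m : ℤ) :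
    vv O π (u * π ^ m) = m :=
  vv_eq hG (unit_pi_mem hu m) (unit_pi_not_mem hG hu0 hui m)

/-- multiply by an inverse: `τ⁻¹ x ∈ Ms (k - vv τ)` when `x ∈ Ms k`. -/
lemma Ms_inv_mul (hG : Good O π) {τ x : F} (hτ : τ ≠ 0) {k : ℤ} (hx : x ∈ Ms O π k) :
    τ⁻¹ * x ∈ Ms O π (k - vv O π τ) := by
  obtain ⟨m, u, hu, hui, rfl⟩ := hG.ex τ hτ
  have hu0 : u ≠ 0 := fun h => hτ (by simp [h])
  rw [vv_unit_pi hG hu hu0 hui m]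
  obtain ⟨c, hc, rfl⟩ := hx
  refine ⟨u⁻¹ * c, mul_mem hui hc, ?_⟩
  have hπm : (π : F) ^ m ≠ 0 := zpow_ne_zero _ hG.pi0
  have h1 : (π : F) ^ k = π ^ (k - m) * π ^ m := by
    rw [← zpow_add₀ hG.pi0]; congr 1; ring
  rw [mul_inv, h1]
  field_simp

/-- the reverse: if `τ⁻¹ x ∈ Ms (k - vv τ)` then `x ∈ Ms k`. -/
lemma Ms_inv_mul_rev (hG : Good O π) {τ x : F} (hτ : τ ≠ 0) {k : ℤ}
    (h : τ⁻¹ * x ∈ Ms O π (k - vv O π τ)) : x ∈ Ms O π k := by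
  obtain ⟨m, u, hu, hui, rfl⟩ := hG.ex τ hτ
  have hu0 : u ≠ 0 := fun hh => hτ (by simp [hh])
  rw [vv_unit_pi hG hu hu0 hui m] at h
  obtain ⟨c, hc, hec⟩ := h
  refine ⟨u * c, mul_mem hu hc, ?_⟩
  have hτ' : u * (π : F) ^ m ≠ 0 := hτ
  have h2 : x = (u * π ^ m) * (π ^ (k - m) * c) := by
    rw [← hec]; field_simp
    rw [mul_div_assoc, div_self (zpow_ne_zero _ hG.pi0), mul_one]
  rw [h2, show (π : F) ^ k = π ^ m * π ^ (k - m) by rw [← zpow_add₀ hG.pi0]; congr 1; ring]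
  ring


lemma vv_pi_mul (hG : Good O π) (e : ℤ) {x : F} (hx : x ≠ 0) :
    vv O π (π ^ e * x) = e + vv O π x := by
  refine vv_eq hG (Ms_pi_shift hG e (vv_spec hG hx).1) ?_
  intro hmem
  have h2 := Ms_pi_shift hG (-e) hmem
  rw [← mul_assoc, ← zpow_add₀ hG.pi0, neg_add_cancel, zpow_zero, one_mul,
    show -e + (e + vv O π x + 1) = vv O π x + 1 by ring] at h2
  exact (vv_spec hG hx).2 h2

-- the pivot (as a natural number) of a vector: the largest index where the
-- minimal valuation is attained.  Junk value for the zero vector.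
open Classical in
noncomputable def pivN (O : Subring F) (π : F) (d : Fin n → F) : ℕ :=
  (Finset.univ.filter (fun i : Fin n =>
    d i ≠ 0 ∧ ∀ i' : Fin n, d i' ≠ 0 → vv O π (d i) ≤ vv O π (d i'))).sup (fun i => i.val)

lemma pivN_mem (hG : Good O π) {d : Fin n → F} (hd : d ≠ 0) :
    ∃ p : Fin n, p.val = pivN O π d ∧ d p ≠ 0 ∧
      ∀ i' : Fin n, d i' ≠ 0 → vv O π (d p) ≤ vv O π (d i') := by
  classical
  have hne : ∃ i, d i ≠ 0 := by
    by_contra h; push_neg at h; exact hd (funext h)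
  obtain ⟨i₁, hi₁⟩ := hne
  have hsne : (Finset.univ.filter (fun i : Fin n => d i ≠ 0)).Nonempty :=
    ⟨i₁, by simp [hi₁]⟩
  obtain ⟨i₀, hi₀mem, hi₀min⟩ := Finset.exists_min_image _ (fun i => vv O π (d i)) hsne
  simp only [Finset.mem_filter, Finset.mem_univ, true_and] at hi₀mem
  have hfil : i₀ ∈ Finset.univ.filter (fun i : Fin n =>
      d i ≠ 0 ∧ ∀ i' : Fin n, d i' ≠ 0 → vv O π (d i) ≤ vv O π (d i')) := by
    simp only [Finset.mem_filter, Finset.mem_univ, true_and]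
    exact ⟨hi₀mem, fun i' hi' => hi₀min i' (by simp [hi'])⟩
  obtain ⟨p, hpmem, hpsup⟩ := Finset.exists_mem_eq_sup _ ⟨i₀, hfil⟩ (fun i : Fin n => i.val)
  simp only [Finset.mem_filter, Finset.mem_univ, true_and] at hpmem
  exact ⟨p, hpsup.symm, hpmem.1, hpmem.2⟩

lemma vv_le_of_not_mem (hG : Good O π) {x : F} {k : ℤ} (hx : x ≠ 0)
    (h : x ∉ Ms O π (k + 1)) : vv O π x ≤ k := by
  by_contra hlt
  exact h (Ms_mono hG (by omega) (vv_spec hG hx).1)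

lemma pivN_char (hG : Good O π) {d : Fin n → F} {p : Fin n} {k : ℤ}
    (hall : ∀ i, d i ∈ Ms O π k) (hp : d p ∉ Ms O π (k + 1))
    (hb : ∀ i, p < i → d i ∈ Ms O π (k + 1)) :
    pivN O π d = p.val ∧ d p ≠ 0 := by
  classical
  have hp0 : d p ≠ 0 := fun h => hp (h ▸ Ms_zero _)
  have hvp : vv O π (d p) = k := vv_eq hG (hall p) hp
  refine ⟨le_antisymm (Finset.sup_le ?_) ?_, hp0⟩
  · intro i hi
    simp only [Finset.mem_filter, Finset.mem_univ, true_and] at hi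
    by_contra hgt
    have hpi : p < i := by
      rw [Fin.lt_def]; omega
    have h1 : (k : ℤ) + 1 ≤ vv O π (d i) := (mem_Ms_iff hG hi.1).1 (hb i hpi)
    have h2 : vv O π (d i) ≤ vv O π (d p) := hi.2 p hp0
    omega
  · refine Finset.le_sup (f := fun i : Fin n => i.val) ?_
    simp only [Finset.mem_filter, Finset.mem_univ, true_and]
    exact ⟨hp0, fun i' hi' => hvp ▸ (mem_Ms_iff hG hi').1 (hall i')⟩

lemma pivN_le (hG : Good O π) {d : Fin n → F} {p : Fin n} {k : ℤ}
    (hp : d p ∉ Ms O π (k + 1)) (hb : ∀ i, p < i → d i ∈ Ms O π (k + 1)) :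
    pivN O π d ≤ p.val := by
  classical
  have hp0 : d p ≠ 0 := fun h => hp (h ▸ Ms_zero _)
  refine Finset.sup_le ?_
  intro i hi
  simp only [Finset.mem_filter, Finset.mem_univ, true_and] at hi
  by_contra hgt
  have hpi : p < i := by rw [Fin.lt_def]; omega
  have h1 : (k : ℤ) + 1 ≤ vv O π (d i) := (mem_Ms_iff hG hi.1).1 (hb i hpi)
  have h2 : vv O π (d i) ≤ vv O π (d p) := hi.2 p hp0
  have h3 : vv O π (d p) ≤ k := vv_le_of_not_mem hG hp0 hp
  omega

lemma pivN_ne_of_zero (hG : Good O π) {d : Fin n → F} (hd : d ≠ 0) {p : Fin n}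
    (hzero : d p = 0) : pivN O π d ≠ p.val := by
  obtain ⟨q, hq, hq0, _⟩ := pivN_mem hG hd
  intro h
  have : q = p := Fin.ext (by omega)
  exact hq0 (this ▸ hzero)

lemma pivN_pi_smul (hG : Good O π) (e : ℤ) (d : Fin n → F) :
    pivN O π (fun i => π ^ e * d i) = pivN O π d := by
  classical
  unfold pivN
  congr 1
  apply Finset.filter_congr
  intro i _
  have hz : ∀ x : F, π ^ e * x ≠ 0 ↔ x ≠ 0 := fun x => by
    constructor
    · intro h hx; exact h (by simp [hx])
    · intro hx h
      rcases mul_eq_zero.1 h with h' | h'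
      · exact zpow_ne_zero _ hG.pi0 h'
      · exact hx h'
  constructor
  · rintro ⟨h1, h2⟩
    refine ⟨(hz _).1 h1, fun i' hi' => ?_⟩
    have := h2 i' ((hz _).2 hi')
    rw [vv_pi_mul hG e ((hz _).1 h1), vv_pi_mul hG e hi'] at this
    omega
  · rintro ⟨h1, h2⟩
    refine ⟨(hz _).2 h1, fun i' hi' => ?_⟩
    rw [vv_pi_mul hG e h1, vv_pi_mul hG e ((hz _).1 hi')]
    have := h2 i' ((hz _).1 hi')
    omega

/-- Lemma E: a family of `k` vectors all of whose nonzero combinations have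
pivots in a set `S` has `k ≤ |S|`. -/
lemma lemE (hG : Good O π) : ∀ (k : ℕ) (S : Finset ℕ) (e : Fin k → (Fin n → F)),
    (∀ a : Fin k → F, a ≠ 0 →
      (∑ l, a l • e l) ≠ 0 ∧ pivN O π (∑ l, a l • e l) ∈ S) → k ≤ S.card := by
  intro k
  induction k with
  | zero => intro S e h; omega
  | succ k ih =>
    intro S e h
    classical
    have h0 : (∑ l, (Pi.single 0 1 : Fin (k+1) → F) l • e l) = e 0 := by
      rw [Finset.sum_eq_single 0]
      · simp
      · intro b _ hb; simp [Pi.single_eq_of_ne hb]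
      · simp
    obtain ⟨he0, hpiv0⟩ := h (Pi.single 0 1 : Fin (k+1) → F) (by
      intro hcontra
      have := congrFun hcontra 0
      simp at this)
    rw [h0] at he0 hpiv0
    obtain ⟨p₀, hp₀val, hp₀ne, _⟩ := pivN_mem hG he0
    set f : Fin k → (Fin n → F) :=
      fun l => e l.succ - ((e l.succ p₀) * (e 0 p₀)⁻¹) • e 0 with hf
    have key : ∀ a : Fin k → F, a ≠ 0 →
        (∑ l, a l • f l) ≠ 0 ∧ pivN O π (∑ l, a l • f l) ∈ S.erase (pivN O π (e 0)) := by
      intro a ha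
      set A : Fin (k+1) → F :=
        Fin.cons (-(∑ l, a l * ((e l.succ p₀) * (e 0 p₀)⁻¹))) a with hA
      have hsum : (∑ l, a l • f l) = ∑ m, A m • e m := by
        rw [Fin.sum_univ_succ]
        simp only [hA, Fin.cons_zero, Fin.cons_succ, hf, smul_sub, smul_smul]
        rw [Finset.sum_sub_distrib, ← Finset.sum_smul, neg_smul, sub_eq_neg_add]
      have hAne : A ≠ 0 := by
        intro hcontra
        apply ha
        funext l
        have := congrFun hcontra l.succ
        simpa [hA] using this
      obtain ⟨hne, hpiv⟩ := h A hAne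
      rw [← hsum] at hne hpiv
      refine ⟨hne, Finset.mem_erase.2 ⟨?_, hpiv⟩⟩
      have hcoord : (∑ l, a l • f l) p₀ = 0 := by
        rw [Finset.sum_apply]
        apply Finset.sum_eq_zero
        intro l _
        simp only [hf, Pi.smul_apply, Pi.sub_apply, smul_eq_mul]
        field_simp
        ring
      rw [← hp₀val]
      exact pivN_ne_of_zero hG hne hcoord
    have := ih (S.erase (pivN O π (e 0))) f key
    have hcard := Finset.card_erase_of_mem hpiv0
    have hpos : 0 < S.card := Finset.card_pos.2 ⟨_, hpiv0⟩
    omega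


open Matrix


lemma Ms_neg {x : F} {k : ℤ} (hx : x ∈ Ms O π k) : -x ∈ Ms O π k := by
  obtain ⟨c, hc, rfl⟩ := hx; exact ⟨-c, neg_mem hc, by ring⟩

lemma Ms_sum {k : ℤ} {s : Finset (Fin n)} {f : Fin n → F}
    (h : ∀ i ∈ s, f i ∈ Ms O π k) : (∑ i ∈ s, f i) ∈ Ms O π k := by
  classical
  induction s using Finset.induction_on with
  | empty => simpa using Ms_zero k
  | @insert a s' hne ih =>
    rw [Finset.sum_insert hne]
    exact Ms_add (h a (Finset.mem_insert_self a s'))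
      (ih fun i hi => h i (Finset.mem_insert_of_mem hi))

lemma strictUpper_pow_entry {N : Matrix (Fin n) (Fin n) F}
    (hN : ∀ i j : Fin n, ¬ i < j → N i j = 0) :
    ∀ (m : ℕ) (i j : Fin n), (j : ℕ) < (i : ℕ) + m → (N ^ m) i j = 0 := by
  intro m
  induction m with
  | zero =>
    intro i j h
    rw [pow_zero]
    exact Matrix.one_apply_ne (by intro he; rw [he] at h; omega)
  | succ m ih =>
    intro i j h
    rw [pow_succ, Matrix.mul_apply]
    apply Finset.sum_eq_zero
    intro k _
    by_cases hk : (k : ℕ) < (i : ℕ) + m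
    · rw [ih i k hk, zero_mul]
    · rw [hN k j (by rw [Fin.lt_def]; omega), mul_zero]

lemma pow_entry_O {N : Matrix (Fin n) (Fin n) F} (hNO : ∀ i j, N i j ∈ O) :
    ∀ (m : ℕ) (i j : Fin n), (N ^ m) i j ∈ O := by
  intro m
  induction m with
  | zero =>
    intro i j
    rw [pow_zero]
    by_cases h : i = j
    · rw [h, Matrix.one_apply_eq]; exact one_mem _
    · rw [Matrix.one_apply_ne h]; exact zero_mem _
  | succ m ih =>
    intro i j
    rw [pow_succ, Matrix.mul_apply]
    exact sum_mem fun k _ => mul_mem (ih i k) (hNO k j)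

/-- the geometric-series inverse of `1 - N` for strictly upper triangular `N`. -/
lemma geom_inv {N : Matrix (Fin n) (Fin n) F}
    (hN : ∀ i j : Fin n, ¬ i < j → N i j = 0) :
    (1 - N) * (∑ m ∈ Finset.range n, N ^ m) = 1 ∧
    (∑ m ∈ Finset.range n, N ^ m) * (1 - N) = 1 := by
  have hNn : N ^ n = 0 := by
    ext i j
    rw [strictUpper_pow_entry hN n i j (by omega)]
    simp
  have h1 := geom_sum_mul N n
  have h2 := mul_geom_sum N n
  rw [hNn] at h1 h2
  constructor
  · rw [show (1 - N : Matrix (Fin n) (Fin n) F) = -(N - 1) from (neg_sub N 1).symm,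
      neg_mul, h2]
    simp
  · rw [show (1 - N : Matrix (Fin n) (Fin n) F) = -(N - 1) from (neg_sub N 1).symm,
      mul_neg, h1]
    simp

lemma geomB_upper {N : Matrix (Fin n) (Fin n) F}
    (hN : ∀ i j : Fin n, ¬ i < j → N i j = 0) (i j : Fin n) (hij : j < i) :
    (∑ m ∈ Finset.range n, N ^ m) i j = 0 := by
  rw [Matrix.sum_apply]
  apply Finset.sum_eq_zero
  intro m _
  exact strictUpper_pow_entry hN m i j (by rw [Fin.lt_def] at hij; omega)

lemma geomB_diag {N : Matrix (Fin n) (Fin n) F}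
    (hN : ∀ i j : Fin n, ¬ i < j → N i j = 0) (i : Fin n) :
    (∑ m ∈ Finset.range n, N ^ m) i i = 1 := by
  rw [Matrix.sum_apply]
  rw [Finset.sum_eq_single_of_mem 0 (Finset.mem_range.2 i.pos)]
  · rw [pow_zero, Matrix.one_apply_eq]
  · intro m _ hm
    exact strictUpper_pow_entry hN m i i (by omega)

lemma geomB_O {N : Matrix (Fin n) (Fin n) F} (hNO : ∀ i j, N i j ∈ O) (i j : Fin n) :
    (∑ m ∈ Finset.range n, N ^ m) i j ∈ O := by
  rw [Matrix.sum_apply]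
  exact sum_mem fun m _ => pow_entry_O hNO m i j

/-- inverse of an upper triangular matrix with nonzero diagonal. -/
lemma borel_inv {b : Matrix (Fin n) (Fin n) F}
    (hupper : ∀ i j : Fin n, j < i → b i j = 0) (hdiag : ∀ i, b i i ≠ 0) :
    ∃ binv : Matrix (Fin n) (Fin n) F, b * binv = 1 ∧
      ∀ i j : Fin n, j < i → binv i j = 0 := by
  obtain ⟨d, hd⟩ : ∃ d : Fin n → F, d = fun i => b i i := ⟨_, rfl⟩
  have hd0 : ∀ i, d i ≠ 0 := by intro i; rw [hd]; exact hdiag i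
  set U : Matrix (Fin n) (Fin n) F := Matrix.diagonal (fun i => (d i)⁻¹) * b with hU
  have hUentry : ∀ i j, U i j = (d i)⁻¹ * b i j := by
    intro i j; rw [hU, Matrix.diagonal_mul]
  set N : Matrix (Fin n) (Fin n) F := 1 - U with hNdef
  have hNsu : ∀ i j : Fin n, ¬ i < j → N i j = 0 := by
    intro i j hij
    rcases eq_or_ne i j with rfl | hne
    · have : U i i = 1 := by rw [hUentry, hd, inv_mul_cancel₀ (hdiag i)]
      simp [hNdef, this]
    · have hji : j < i := lt_of_le_of_ne (not_lt.1 hij) (Ne.symm hne)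
      simp [hNdef, hUentry, Matrix.one_apply_ne hne, hupper i j hji]
  have hUN : U = 1 - N := by rw [hNdef, sub_sub_cancel]
  set B' : Matrix (Fin n) (Fin n) F := ∑ m ∈ Finset.range n, N ^ m with hB'
  have hgeom := geom_inv hNsu
  have hdinv : (fun i => d i * (d i)⁻¹) = fun _ => (1 : F) := by
    funext i; exact mul_inv_cancel₀ (hd0 i)
  have hb : b = Matrix.diagonal d * U := by
    rw [hU, ← Matrix.mul_assoc, Matrix.diagonal_mul_diagonal, hdinv, Matrix.diagonal_one,
      Matrix.one_mul]
  refine ⟨B' * Matrix.diagonal (fun i => (d i)⁻¹), ?_, ?_⟩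
  · rw [hb, Matrix.mul_assoc, ← Matrix.mul_assoc U B', hUN, hgeom.1, Matrix.one_mul,
      Matrix.diagonal_mul_diagonal, hdinv, Matrix.diagonal_one]
  · intro i j hij
    rw [Matrix.mul_diagonal, hB', geomB_upper hNsu i j hij, zero_mul]

lemma mulVec_suppLE {A : Matrix (Fin n) (Fin n) F}
    (hA : ∀ i j : Fin n, j < i → A i j = 0) {c : Fin n → F} {l : ℕ}
    (hc : ∀ s : Fin n, l < (s : ℕ) → c s = 0) :
    ∀ s : Fin n, l < (s : ℕ) → (A.mulVec c) s = 0 := by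
  intro s hs
  show (∑ m, A s m * c m) = 0
  apply Finset.sum_eq_zero
  intro m _
  by_cases hm : (m : ℕ) ≤ l
  · rw [hA s m (by rw [Fin.lt_def]; omega), zero_mul]
  · rw [hc m (by omega), mul_zero]



section LemA
variable (hG : Good O π) (w : Equiv.Perm (Fin n)) {r : Matrix (Fin n) (Fin n) F}
variable (hr1 : ∀ l : Fin n, r (w l) l = 1)
variable (hr0 : ∀ i j : Fin n, w⁻¹ i < j → r i j = 0)
variable (hrO : ∀ i j : Fin n, j < w⁻¹ i → i < w j → r i j ∈ Ms O π 0)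
variable (hrP : ∀ i j : Fin n, j < w⁻¹ i → w j < i → r i j ∈ Ms O π 1)

include hG hr1 hr0 hrO hrP in
lemma r_entry_O : ∀ i j : Fin n, r i j ∈ Ms O π 0 := by
  intro i j
  rcases lt_trichotomy (w⁻¹ i) j with h | h | h
  · rw [hr0 i j h]; exact Ms_zero 0
  · have : i = w j := by
      have := congrArg w h
      simpa using this
    rw [this, hr1 j]
    exact Ms_of_O (one_mem O)
  · rcases lt_trichotomy i (w j) with h2 | h2 | h2
    · exact hrO i j h h2
    · exfalso
      have h3 : w⁻¹ i = j := by rw [h2]; simp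
      rw [h3] at h
      exact lt_irrefl j h
    · exact Ms_mono hG (by omega) (hrP i j h h2)

include hG hr1 hr0 hrO hrP in
/-- Lemma A: pivots of combinations of the first columns of `r ∈ R_w`. -/
lemma lemA (T : Finset (Fin n)) (a : Fin n → F)
    (hsupp : ∀ l, a l ≠ 0 → l ∈ T) (ha : a ≠ 0) :
    ∃ ls : Fin n, ls ∈ T ∧ (r.mulVec a) ≠ 0 ∧ pivN O π (r.mulVec a) = (w ls : Fin n).val := by
  classical
  have hne : ∃ l, a l ≠ 0 := by
    by_contra h; push_neg at h; exact ha (funext h)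
  obtain ⟨l₁, hl₁⟩ := hne
  have hsne : (Finset.univ.filter (fun l : Fin n => a l ≠ 0)).Nonempty := ⟨l₁, by simp [hl₁]⟩
  obtain ⟨l₀, hl₀mem, hl₀min⟩ :=
    Finset.exists_min_image _ (fun l => vv O π (a l)) hsne
  simp only [Finset.mem_filter, Finset.mem_univ, true_and] at hl₀mem
  set μ : ℤ := vv O π (a l₀) with hμ
  set a' : Fin n → F := fun l => π ^ (-μ) * a l with ha'
  have haa' : a = fun l => π ^ μ * a' l := by
    funext l
    rw [ha']
    rw [← mul_assoc, ← zpow_add₀ hG.pi0]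
    simp
  have ha'O : ∀ l, a' l ∈ Ms O π 0 := by
    intro l
    by_cases h : a l = 0
    · rw [ha']; simp only [h, mul_zero]; exact Ms_zero 0
    · have h1 : μ ≤ vv O π (a l) := hl₀min l (by simp [h])
      have h2 : a l ∈ Ms O π μ := (mem_Ms_iff hG h).2 h1
      have := Ms_pi_shift hG (-μ) h2
      rwa [neg_add_cancel] at this
  have hl₀' : a' l₀ ∉ Ms O π 1 := by
    intro hmem
    have h2 := Ms_pi_shift hG μ hmem
    rw [ha'] at h2
    rw [← mul_assoc, ← zpow_add₀ hG.pi0] at h2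
    simp only [add_neg_cancel, zpow_zero, one_mul] at h2
    rw [show μ + 1 = vv O π (a l₀) + 1 from by rw [hμ]] at h2
    exact (vv_spec hG hl₀mem).2 h2
  set s' := Finset.univ.filter (fun l : Fin n => a' l ∉ Ms O π 1) with hs'
  have hs'ne : s'.Nonempty := ⟨l₀, by simp [hs', hl₀']⟩
  obtain ⟨ls, hlsmem, hlsmax⟩ := Finset.exists_max_image s' (fun l => ((w l : Fin n) : ℕ)) hs'ne
  simp only [hs', Finset.mem_filter, Finset.mem_univ, true_and] at hlsmem
  have hlsne : a' ls ≠ 0 := fun h => hlsmem (h ▸ Ms_zero 1)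
  have halsne : a ls ≠ 0 := by
    intro h
    apply hlsne
    show π ^ (-μ) * a ls = 0
    rw [h, mul_zero]
  have hkey : ∀ l : Fin n, (w ls : Fin n) < w l → a' l ∈ Ms O π 1 := by
    intro l hl
    by_contra hmem
    have : l ∈ s' := by simp [hs', hmem]
    have := hlsmax l this
    rw [Fin.lt_def] at hl
    omega
  -- claims about d' = r.mulVec a'
  set d' : Fin n → F := r.mulVec a' with hd'
  have hd'entry : ∀ i, d' i = ∑ l, r i l * a' l := fun i => rfl
  have claim1 : ∀ i, d' i ∈ Ms O π 0 := by
    intro i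
    rw [hd'entry]
    apply Ms_sum
    intro l _
    have := Ms_mul hG (r_entry_O hG w hr1 hr0 hrO hrP i l) (ha'O l)
    rwa [add_zero] at this
  have claim2 : d' (w ls) ∉ Ms O π (0 + 1) := by
    rw [hd'entry]
    rw [← Finset.add_sum_erase _ _ (Finset.mem_univ ls)]
    rw [hr1 ls, one_mul]
    intro hmem
    apply hlsmem
    have hrest : (∑ l ∈ Finset.univ.erase ls, r (w ls) l * a' l) ∈ Ms O π 1 := by
      apply Ms_sum
      intro l hl
      have hlne : l ≠ ls := (Finset.mem_erase.1 hl).1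
      rcases lt_trichotomy (w⁻¹ (w ls)) l with h | h | h
      · rw [hr0 _ l h, zero_mul]; exact Ms_zero 1
      · exfalso; apply hlne; rw [← h]; simp
      · rcases lt_trichotomy ((w ls : Fin n)) (w l) with h2 | h2 | h2
        · have := Ms_mul hG (hrO _ l h h2) (hkey l h2)
          rwa [zero_add] at this
        · exact absurd (w.injective h2) hlne.symm
        · have := Ms_mul hG (hrP _ l h h2) (ha'O l)
          rwa [add_zero] at this
    have h2' : a' ls = (a' ls + (∑ l ∈ Finset.univ.erase ls, r (w ls) l * a' l)) +
        (-(∑ l ∈ Finset.univ.erase ls, r (w ls) l * a' l)) := by ring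
    rw [h2']
    exact Ms_add hmem (Ms_neg hrest)
  have claim3 : ∀ i, (w ls : Fin n) < i → d' i ∈ Ms O π (0 + 1) := by
    intro i hi
    rw [hd'entry]
    rw [zero_add]
    apply Ms_sum
    intro l _
    rcases lt_trichotomy (w⁻¹ i) l with h | h | h
    · rw [hr0 i l h, zero_mul]; exact Ms_zero 1
    · have hiw : i = w l := by
        have := congrArg w h; simpa using this
      have : a' l ∈ Ms O π 1 := hkey l (hiw ▸ hi)
      have h2 := Ms_mul hG (r_entry_O hG w hr1 hr0 hrO hrP i l) this
      rwa [zero_add] at h2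
    · rcases lt_trichotomy i (w l) with h2 | h2 | h2
      · have h3 : a' l ∈ Ms O π 1 := hkey l (hi.trans h2)
        have h4 := Ms_mul hG (hrO i l h h2) h3
        rwa [zero_add] at h4
      · exfalso
        have : w⁻¹ i = l := by rw [h2]; simp
        rw [this] at h
        exact lt_irrefl l h
      · have h4 := Ms_mul hG (hrP i l h h2) (ha'O l)
        rwa [add_zero] at h4
  obtain ⟨hpiv', hne'⟩ := pivN_char hG claim1 claim2 claim3
  have hd'ne : d' ≠ 0 := by
    intro h
    apply claim2
    rw [h]
    exact Ms_zero _
  refine ⟨ls, hsupp ls halsne, ?_, ?_⟩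
  · rw [haa']
    have : r.mulVec (fun l => π ^ μ * a' l) = fun i => π ^ μ * d' i := by
      have h1 : (fun l => π ^ μ * a' l) = (π ^ μ) • a' := by
        funext l; simp [smul_eq_mul]
      rw [h1, Matrix.mulVec_smul]
      funext i
      simp [hd', smul_eq_mul]
    rw [this]
    intro h
    apply hd'ne
    funext i
    have := congrFun h i
    simp only [Pi.zero_apply] at this ⊢
    rcases mul_eq_zero.1 this with h' | h'
    · exact absurd h' (zpow_ne_zero _ hG.pi0)
    · exact h'
  · rw [haa']
    have : r.mulVec (fun l => π ^ μ * a' l) = fun i => π ^ μ * d' i := by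
      have h1 : (fun l => π ^ μ * a' l) = (π ^ μ) • a' := by
        funext l; simp [smul_eq_mul]
      rw [h1, Matrix.mulVec_smul]
      funext i
      simp [hd', smul_eq_mul]
    rw [this, pivN_pi_smul hG μ d', hpiv']

end LemA

/-- C1: multiplication by upper triangular, unit diagonal, `O`-entry matrices
preserves the pivot. -/
lemma lemC1 (hG : Good O π) {B : Matrix (Fin n) (Fin n) F}
    (hBu : ∀ i j : Fin n, j < i → B i j = 0) (hBd : ∀ i, B i i = 1)
    (hBO : ∀ i j, B i j ∈ Ms O π 0) {e : Fin n → F} (he : e ≠ 0) :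
    B.mulVec e ≠ 0 ∧ pivN O π (B.mulVec e) = pivN O π e := by
  classical
  obtain ⟨p, hpval, hp0, hpmin⟩ := pivN_mem hG he
  set k : ℤ := vv O π (e p) with hk
  have hallk : ∀ i, e i ∈ Ms O π k := by
    intro i
    by_cases h : e i = 0
    · rw [h]; exact Ms_zero k
    · exact (mem_Ms_iff hG h).2 (hpmin i h)
  have hpk : e p ∉ Ms O π (k + 1) := (vv_spec hG hp0).2
  have habove : ∀ i, p < i → e i ∈ Ms O π (k + 1) := by
    intro i hi
    by_cases h : e i = 0
    · rw [h]; exact Ms_zero _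
    · have h1 : k ≤ vv O π (e i) := hpmin i h
      have h2 : vv O π (e i) ≠ k := by
        intro heq
        have hmem : i ∈ Finset.univ.filter (fun i : Fin n =>
            e i ≠ 0 ∧ ∀ i' : Fin n, e i' ≠ 0 → vv O π (e i) ≤ vv O π (e i')) := by
          simp only [Finset.mem_filter, Finset.mem_univ, true_and]
          exact ⟨h, fun i' hi' => by rw [heq, hk]; exact hpmin i' hi'⟩
        have := Finset.le_sup (f := fun i : Fin n => i.val) hmem
        have h3 : (i : ℕ) ≤ pivN O π e := this
        rw [← hpval] at h3
        rw [Fin.lt_def] at hi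
        omega
      exact (mem_Ms_iff hG h).2 (by omega)
  have hBe : ∀ i, (B.mulVec e) i = ∑ j, B i j * e j := fun i => rfl
  have c1 : ∀ i, (B.mulVec e) i ∈ Ms O π k := by
    intro i
    rw [hBe]
    apply Ms_sum
    intro j _
    have := Ms_mul hG (hBO i j) (hallk j)
    rwa [zero_add] at this
  have c2 : (B.mulVec e) p ∉ Ms O π (k + 1) := by
    rw [hBe]
    rw [← Finset.add_sum_erase _ _ (Finset.mem_univ p), hBd p, one_mul]
    intro hmem
    apply hpk
    have hrest : (∑ j ∈ Finset.univ.erase p, B p j * e j) ∈ Ms O π (k+1) := by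
      apply Ms_sum
      intro j hj
      have hjne : j ≠ p := (Finset.mem_erase.1 hj).1
      rcases lt_or_gt_of_ne hjne with h | h
      · rw [hBu p j h, zero_mul]; exact Ms_zero _
      · have := Ms_mul hG (hBO p j) (habove j h)
        rwa [zero_add] at this
    have h2' : e p = (e p + (∑ j ∈ Finset.univ.erase p, B p j * e j)) +
        (-(∑ j ∈ Finset.univ.erase p, B p j * e j)) := by ring
    rw [h2']
    exact Ms_add hmem (Ms_neg hrest)
  have c3 : ∀ i, p < i → (B.mulVec e) i ∈ Ms O π (k + 1) := by
    intro i hi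
    rw [hBe]
    apply Ms_sum
    intro j _
    rcases lt_trichotomy j i with h | h | h
    · rw [hBu i j h, zero_mul]; exact Ms_zero _
    · have := Ms_mul hG (hBO i j) (habove j (h ▸ hi))
      rwa [zero_add] at this
    · have := Ms_mul hG (hBO i j) (habove j (hi.trans h))
      rwa [zero_add] at this
  obtain ⟨hpiv, hne⟩ := pivN_char hG c1 c2 c3
  refine ⟨?_, by rw [hpiv, hpval]⟩
  intro h
  apply c2
  rw [h]
  exact Ms_zero _

/-- C2: dividing entrywise by a diagonal with non-increasing valuations can
only decrease the pivot. -/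
lemma lemC2 (hG : Good O π) {τ : Fin n → F} (hτ0 : ∀ i, τ i ≠ 0)
    (hmono : ∀ i j : Fin n, i ≤ j → vv O π (τ j) ≤ vv O π (τ i))
    {e : Fin n → F} (he : e ≠ 0) :
    pivN O π (fun i => (τ i)⁻¹ * e i) ≤ pivN O π e := by
  classical
  obtain ⟨p, hpval, hp0, hpmin⟩ := pivN_mem hG he
  set k : ℤ := vv O π (e p) with hk
  have hpk : e p ∉ Ms O π (k + 1) := (vv_spec hG hp0).2
  have habove : ∀ i, p < i → e i ∈ Ms O π (k + 1) := by
    intro i hi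
    by_cases h : e i = 0
    · rw [h]; exact Ms_zero _
    · have h1 : k ≤ vv O π (e i) := hpmin i h
      have h2 : vv O π (e i) ≠ k := by
        intro heq
        have hmem : i ∈ Finset.univ.filter (fun i : Fin n =>
            e i ≠ 0 ∧ ∀ i' : Fin n, e i' ≠ 0 → vv O π (e i) ≤ vv O π (e i')) := by
          simp only [Finset.mem_filter, Finset.mem_univ, true_and]
          exact ⟨h, fun i' hi' => by rw [heq, hk]; exact hpmin i' hi'⟩
        have := Finset.le_sup (f := fun i : Fin n => i.val) hmem
        have h3 : (i : ℕ) ≤ pivN O π e := this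
        rw [← hpval] at h3
        rw [Fin.lt_def] at hi
        omega
      exact (mem_Ms_iff hG h).2 (by omega)
  set c : ℤ := k - vv O π (τ p) with hc
  have hfp : (τ p)⁻¹ * e p ∉ Ms O π (c + 1) := by
    intro hmem
    apply hpk
    apply Ms_inv_mul_rev hG (hτ0 p) (k := k + 1)
    rwa [show k + 1 - vv O π (τ p) = c + 1 from by rw [hc]; ring]
  have hfa : ∀ i, p < i → (τ i)⁻¹ * e i ∈ Ms O π (c + 1) := by
    intro i hi
    have h1 := Ms_inv_mul hG (hτ0 i) (habove i hi)
    refine Ms_mono hG ?_ h1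
    have := hmono p i (le_of_lt hi)
    omega
  calc pivN O π (fun i => (τ i)⁻¹ * e i) ≤ (p : ℕ) := pivN_le hG hfp hfa
    _ = pivN O π e := hpval

end S12

namespace S12

open Finset

variable {n : ℕ}

/-- number of `s ≤ l` with `u s ≥ i`. -/
def Cnt (u : Equiv.Perm (Fin n)) (i l : ℕ) : ℕ :=
  (Finset.univ.filter (fun s : Fin n => (s : ℕ) ≤ l ∧ i ≤ ((u s : Fin n) : ℕ))).card

lemma len_swap_lt (w : Equiv.Perm (Fin n)) (j m : Fin n) (hjm : j < m) (hv : w m < w j) :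
    len (w * Equiv.swap j m) < len w := by
  classical
  set τ := Equiv.swap j m with hτdef
  have hτj : τ j = m := Equiv.swap_apply_left j m
  have hτm : τ m = j := Equiv.swap_apply_right j m
  have hτo : ∀ x, x ≠ j → x ≠ m → τ x = x := fun x h1 h2 => Equiv.swap_apply_of_ne_of_ne h1 h2
  have hwt : ∀ s, (w * τ) s = w (τ s) := fun s => rfl
  set φ : Fin n × Fin n → Fin n × Fin n := fun q =>
    if q.2 = j then (q.1, m)
    else if q.1 = j then (if q.2 < m then q else (m, q.2))
    else if q.2 = m then (if q.1 < j then (q.1, j) else q)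
    else if q.1 = m then (j, q.2)
    else q with hφ
  have phi_eval : ∀ p s : Fin n, φ (p, s) =
      if s = j then (p, m)
      else if p = j then (if s < m then (p, s) else (m, s))
      else if s = m then (if p < j then (p, j) else (p, s))
      else if p = m then (j, s)
      else (p, s) := fun p s => rfl
  set Iw := Finset.univ.filter (fun q : Fin n × Fin n => q.1 < q.2 ∧ w q.2 < w q.1) with hIw
  set Iwt := Finset.univ.filter
    (fun q : Fin n × Fin n => q.1 < q.2 ∧ (w * τ) q.2 < (w * τ) q.1) with hIwt
  have hjm' : (j : ℕ) < (m : ℕ) := hjm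
  have memIw : ∀ p s : Fin n, (p, s) ∈ Iw ↔ (p < s ∧ w s < w p) := by
    intro p s; rw [hIw, Finset.mem_filter]; simp
  have memIwt : ∀ p s : Fin n, (p, s) ∈ Iwt ↔ (p < s ∧ w (τ s) < w (τ p)) := by
    intro p s; rw [hIwt, Finset.mem_filter]
    constructor
    · rintro ⟨-, h1, h2⟩; rw [hwt, hwt] at h2; exact ⟨h1, h2⟩
    · rintro ⟨h1, h2⟩; exact ⟨Finset.mem_univ _, h1, by rw [hwt, hwt]; exact h2⟩
  have main : ∀ q ∈ Iwt, (φ q ∈ Iw ∧ φ q ≠ (j, m)) ∧ φ (φ q) = q := by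
    rintro ⟨p, s⟩ hq
    obtain ⟨hps, hinv⟩ := (memIwt p s).1 hq
    have hps' : (p : ℕ) < (s : ℕ) := hps
    by_cases h1 : s = j
    · -- C1 : s = j, p < j
      have hpj : (p : ℕ) < (j : ℕ) := by rw [h1] at hps'; exact hps'
      have hpnej : p ≠ j := fun hc => by rw [hc] at hpj; omega
      have hpnem : p ≠ m := fun hc => by rw [hc] at hpj; omega
      rw [h1, hτj, hτo p hpnej hpnem] at hinv
      have hφq : φ (p, s) = (p, m) := by rw [phi_eval, if_pos h1]
      rw [hφq]
      refine ⟨⟨(memIw p m).2 ⟨by rw [Fin.lt_def]; omega, hinv⟩, ?_⟩, ?_⟩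
      · intro hc; rw [Prod.ext_iff] at hc; exact hpnej hc.1
      · rw [phi_eval, if_neg (fun hc : m = j => by rw [hc] at hjm'; omega),
          if_neg hpnej, if_pos rfl, if_pos (show p < j by rw [Fin.lt_def]; omega), h1]
    · by_cases h2 : p = j
      · -- C2 : p = j
        have hsnem : s ≠ m := by
          intro hc
          rw [h2, hτj, hc, hτm] at hinv
          exact absurd hinv (lt_asymm hv)
        rw [h2, hτj, hτo s h1 hsnem] at hinv
        by_cases h3 : s < m
        · -- C2a : j < s < m
          have hφq : φ (p, s) = (p, s) := by
            rw [phi_eval, if_neg h1, if_pos h2, if_pos h3]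
          rw [hφq]
          refine ⟨⟨(memIw p s).2 ⟨hps, by rw [h2]; exact lt_trans hinv hv⟩, ?_⟩, ?_⟩
          · intro hc; rw [Prod.ext_iff] at hc; exact hsnem hc.2
          · rw [hφq]
        · -- C2b : s > m
          have hsm' : (m : ℕ) < (s : ℕ) := by
            rw [Fin.lt_def] at h3
            have : (s:ℕ) ≠ (m:ℕ) := fun hc => hsnem (Fin.ext hc)
            omega
          have hφq : φ (p, s) = (m, s) := by
            rw [phi_eval, if_neg h1, if_pos h2, if_neg h3]
          rw [hφq]
          have hmnej : m ≠ j := fun hc => by rw [hc] at hjm'; omega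
          refine ⟨⟨(memIw m s).2 ⟨by rw [Fin.lt_def]; omega, hinv⟩, ?_⟩, ?_⟩
          · intro hc; rw [Prod.ext_iff] at hc; exact hmnej hc.1
          · rw [phi_eval, if_neg h1, if_neg hmnej, if_neg hsnem, if_pos rfl, h2]
      · by_cases h3 : s = m
        · -- C3 : s = m, p ≠ j
          have hpnem : p ≠ m := fun hc => by rw [hc, h3] at hps'; omega
          rw [h3, hτm, hτo p h2 hpnem] at hinv
          by_cases h4 : p < j
          · -- C3a : p < j
            have hφq : φ (p, s) = (p, j) := by
              rw [phi_eval, if_neg h1, if_neg h2, if_pos h3, if_pos h4]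
            rw [hφq]
            refine ⟨⟨(memIw p j).2 ⟨h4, hinv⟩, ?_⟩, ?_⟩
            · intro hc; rw [Prod.ext_iff] at hc
              have hcm : j = m := hc.2
              rw [hcm] at hjm'; omega
            · rw [phi_eval, if_pos rfl, h3]
          · -- C3b : j < p < m
            have hφq : φ (p, s) = (p, s) := by
              rw [phi_eval, if_neg h1, if_neg h2, if_pos h3, if_neg h4]
            rw [hφq]
            refine ⟨⟨(memIw p s).2 ⟨hps, by rw [h3]; exact lt_trans hv hinv⟩, ?_⟩, ?_⟩
            · intro hc; rw [Prod.ext_iff] at hc; exact h2 hc.1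
            · rw [hφq]
        · by_cases h4 : p = m
          · -- C4 : p = m, s > m
            rw [h4, hτm, hτo s h1 h3] at hinv
            have hφq : φ (p, s) = (j, s) := by
              rw [phi_eval, if_neg h1, if_neg h2, if_neg h3, if_pos h4]
            rw [hφq]
            have hms : (m : ℕ) < (s : ℕ) := by rw [h4] at hps'; exact hps'
            refine ⟨⟨(memIw j s).2 ⟨by rw [Fin.lt_def]; omega, hinv⟩, ?_⟩, ?_⟩
            · intro hc; rw [Prod.ext_iff] at hc; exact h3 hc.2
            · rw [phi_eval, if_neg h1, if_pos rfl, if_neg (show ¬ s < m by rw [Fin.lt_def]; omega), h4]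
          · -- C5
            rw [hτo s h1 h3, hτo p h2 h4] at hinv
            have hφq : φ (p, s) = (p, s) := by
              rw [phi_eval, if_neg h1, if_neg h2, if_neg h3, if_neg h4]
            rw [hφq]
            refine ⟨⟨(memIw p s).2 ⟨hps, hinv⟩, ?_⟩, ?_⟩
            · intro hc; rw [Prod.ext_iff] at hc; exact h2 hc.1
            · rw [hφq]
  have hmem : (j, m) ∈ Iw := (memIw j m).2 ⟨hjm, hv⟩
  have hcard : Iwt.card ≤ (Iw.erase (j, m)).card := by
    apply Finset.card_le_card_of_injOn φ
    · intro q hq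
      obtain ⟨⟨hmem', hne⟩, -⟩ := main q hq
      exact Finset.mem_erase.2 ⟨hne, hmem'⟩
    · intro q1 hq1 q2 hq2 heq
      have h1 := (main q1 (by simpa using hq1)).2
      have h2 := (main q2 (by simpa using hq2)).2
      rw [← h1, ← h2, heq]
  have hlt : (Iw.erase (j, m)).card < Iw.card := Finset.card_erase_lt_of_mem hmem
  show Iwt.card < Iw.card
  omega

end S12

namespace S12
open Finset
variable {n : ℕ}

lemma Cnt_swap_outside (w : Equiv.Perm (Fin n)) (j m : Fin n) (hjm : j < m) (i l : ℕ)
    (hl : l < (j : ℕ) ∨ (m : ℕ) ≤ l) :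
    Cnt (w * Equiv.swap j m) i l = Cnt w i l := by
  classical
  set τ := Equiv.swap j m with hτdef
  have hττ : ∀ s, τ (τ s) = s := fun s => Equiv.swap_apply_self j m s
  have hjm' : (j : ℕ) < (m : ℕ) := hjm
  have hτle : ∀ s : Fin n, (s : ℕ) ≤ l → ((τ s : Fin n) : ℕ) ≤ l := by
    intro s hs
    by_cases h1 : s = j
    · rw [h1, Equiv.swap_apply_left]
      rcases hl with h | h
      · rw [h1] at hs; omega
      · omega
    · by_cases h2 : s = m
      · rw [h2, Equiv.swap_apply_right]; omega
      · rw [Equiv.swap_apply_of_ne_of_ne h1 h2]; exact hs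
  unfold Cnt
  apply Finset.card_bij' (fun s _ => τ s) (fun s _ => τ s)
  · intro a ha
    simp only [Finset.mem_filter, Finset.mem_univ, true_and] at ha ⊢
    exact ⟨hτle a ha.1, ha.2⟩
  · intro a ha
    simp only [Finset.mem_filter, Finset.mem_univ, true_and] at ha ⊢
    refine ⟨hτle a ha.1, ?_⟩
    show i ≤ ((w (τ (τ a)) : Fin n) : ℕ)
    rw [hττ]; exact ha.2
  · intro a _; exact hττ a
  · intro a _; exact hττ a

lemma Cnt_swap_inside_eq (w : Equiv.Perm (Fin n)) (j m : Fin n) (hjm : j < m)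
    (hv : w m < w j) (i l : ℕ) (hl1 : (j : ℕ) ≤ l) (hl2 : l < (m : ℕ))
    (hi : i ≤ ((w m : Fin n) : ℕ) ∨ ((w j : Fin n) : ℕ) < i) :
    Cnt (w * Equiv.swap j m) i l = Cnt w i l := by
  classical
  unfold Cnt
  congr 1
  apply Finset.filter_congr
  intro s _
  by_cases h1 : s = j
  · rw [h1]
    have : (w * Equiv.swap j m) j = w m := by
      show w (Equiv.swap j m j) = w m
      rw [Equiv.swap_apply_left]
    rw [this]
    have hvv : ((w m : Fin n) : ℕ) < ((w j : Fin n) : ℕ) := hv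
    constructor
    · rintro ⟨hh1, hh2⟩
      refine ⟨hh1, ?_⟩
      rcases hi with h | h
      · omega
      · omega
    · rintro ⟨hh1, hh2⟩
      refine ⟨hh1, ?_⟩
      rcases hi with h | h
      · omega
      · omega
  · by_cases hsl : (s : ℕ) ≤ l
    · have h2 : s ≠ m := by
        intro hc; rw [hc] at hsl; omega
      have : (w * Equiv.swap j m) s = w s := by
        show w (Equiv.swap j m s) = w s
        rw [Equiv.swap_apply_of_ne_of_ne h1 h2]
      rw [this]
    · constructor
      · rintro ⟨hh1, _⟩; exact absurd hh1 hsl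
      · rintro ⟨hh1, _⟩; exact absurd hh1 hsl

lemma Cnt_swap_inside_lt (w : Equiv.Perm (Fin n)) (j m : Fin n) (hjm : j < m)
    (hv : w m < w j) (i l : ℕ) (hl1 : (j : ℕ) ≤ l) (hl2 : l < (m : ℕ))
    (hi1 : ((w m : Fin n) : ℕ) < i) (hi2 : i ≤ ((w j : Fin n) : ℕ)) :
    Cnt (w * Equiv.swap j m) i l + 1 = Cnt w i l := by
  classical
  have hset : (Finset.univ.filter (fun s : Fin n =>
      (s : ℕ) ≤ l ∧ i ≤ (((w * Equiv.swap j m) s : Fin n) : ℕ))) =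
      (Finset.univ.filter (fun s : Fin n =>
        (s : ℕ) ≤ l ∧ i ≤ ((w s : Fin n) : ℕ))).erase j := by
    ext s
    simp only [Finset.mem_filter, Finset.mem_univ, true_and, Finset.mem_erase]
    by_cases h1 : s = j
    · rw [h1]
      have heval : (w * Equiv.swap j m) j = w m := by
        show w (Equiv.swap j m j) = w m
        rw [Equiv.swap_apply_left]
      rw [heval]
      constructor
      · rintro ⟨-, hh2⟩; omega
      · rintro ⟨hc, -⟩; exact absurd rfl hc
    · by_cases hsl : (s : ℕ) ≤ l
      · have h2 : s ≠ m := by intro hc; rw [hc] at hsl; omega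
        have heval : (w * Equiv.swap j m) s = w s := by
          show w (Equiv.swap j m s) = w s
          rw [Equiv.swap_apply_of_ne_of_ne h1 h2]
        rw [heval]
        constructor
        · rintro ⟨hh1, hh2⟩; exact ⟨h1, hh1, hh2⟩
        · rintro ⟨-, hh1, hh2⟩; exact ⟨hh1, hh2⟩
      · constructor
        · rintro ⟨hh1, -⟩; exact absurd hh1 hsl
        · rintro ⟨-, hh1, -⟩; exact absurd hh1 hsl
  have hjmem : j ∈ (Finset.univ.filter (fun s : Fin n =>
      (s : ℕ) ≤ l ∧ i ≤ ((w s : Fin n) : ℕ))) := by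
    simp only [Finset.mem_filter, Finset.mem_univ, true_and]
    exact ⟨hl1, hi2⟩
  unfold Cnt
  rw [hset, Finset.card_erase_of_mem hjmem]
  have : 0 < (Finset.univ.filter (fun s : Fin n =>
      (s : ℕ) ≤ l ∧ i ≤ ((w s : Fin n) : ℕ))).card := Finset.card_pos.2 ⟨j, hjmem⟩
  omega

def Pre (u : Equiv.Perm (Fin n)) (i : ℕ) (j : Fin n) : ℕ :=
  (Finset.univ.filter (fun s : Fin n => (s : ℕ) < (j : ℕ) ∧ i ≤ ((u s : Fin n) : ℕ))).card

def Mid (u : Equiv.Perm (Fin n)) (i : ℕ) (j : Fin n) (l : ℕ) : ℕ :=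
  (Finset.univ.filter (fun s : Fin n =>
    (j : ℕ) < (s : ℕ) ∧ (s : ℕ) ≤ l ∧ i ≤ ((u s : Fin n) : ℕ))).card

lemma Cnt_split (u : Equiv.Perm (Fin n)) (i : ℕ) (j : Fin n) (l : ℕ) (hjl : (j : ℕ) ≤ l) :
    Cnt u i l = Pre u i j + (if i ≤ ((u j : Fin n) : ℕ) then 1 else 0) + Mid u i j l := by
  classical
  set A1 := Finset.univ.filter (fun s : Fin n => (s : ℕ) < (j : ℕ) ∧ i ≤ ((u s : Fin n) : ℕ))
    with hA1
  set A2 := Finset.univ.filter (fun s : Fin n => s = j ∧ i ≤ ((u s : Fin n) : ℕ)) with hA2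
  set A3 := Finset.univ.filter (fun s : Fin n =>
    (j : ℕ) < (s : ℕ) ∧ (s : ℕ) ≤ l ∧ i ≤ ((u s : Fin n) : ℕ)) with hA3
  have hunion : (Finset.univ.filter (fun s : Fin n =>
      (s : ℕ) ≤ l ∧ i ≤ ((u s : Fin n) : ℕ))) = (A1 ∪ A2) ∪ A3 := by
    ext s
    simp only [hA1, hA2, hA3, Finset.mem_filter, Finset.mem_univ, true_and, Finset.mem_union]
    constructor
    · rintro ⟨h1, h2⟩
      rcases lt_trichotomy ((s : ℕ)) ((j : ℕ)) with h | h | h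
      · exact Or.inl (Or.inl ⟨h, h2⟩)
      · exact Or.inl (Or.inr ⟨Fin.ext h, h2⟩)
      · exact Or.inr ⟨h, h1, h2⟩
    · rintro ((⟨h1, h2⟩ | ⟨h1, h2⟩) | ⟨h1, h2, h3⟩)
      · exact ⟨by omega, h2⟩
      · subst h1; exact ⟨hjl, h2⟩
      · exact ⟨h2, h3⟩
  have hd1 : Disjoint A1 A2 := by
    rw [Finset.disjoint_left]
    intro s hs1 hs2
    simp only [hA1, hA2, Finset.mem_filter, Finset.mem_univ, true_and] at hs1 hs2
    rw [hs2.1] at hs1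
    omega
  have hd2 : Disjoint (A1 ∪ A2) A3 := by
    rw [Finset.disjoint_left]
    intro s hs1 hs2
    simp only [hA1, hA2, hA3, Finset.mem_filter, Finset.mem_univ, true_and,
      Finset.mem_union] at hs1 hs2
    rcases hs1 with ⟨h1, -⟩ | ⟨h1, -⟩
    · omega
    · rw [h1] at hs2; omega
  have hA2card : A2.card = if i ≤ ((u j : Fin n) : ℕ) then 1 else 0 := by
    by_cases hij : i ≤ ((u j : Fin n) : ℕ)
    · rw [if_pos hij]
      have : A2 = {j} := by
        ext s
        simp only [hA2, Finset.mem_filter, Finset.mem_univ, true_and, Finset.mem_singleton]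
        constructor
        · rintro ⟨h, -⟩; exact h
        · rintro rfl; exact ⟨rfl, hij⟩
      rw [this, Finset.card_singleton]
    · rw [if_neg hij]
      have : A2 = ∅ := by
        ext s
        simp only [hA2, Finset.mem_filter, Finset.mem_univ, true_and, Finset.notMem_empty,
          iff_false]
        rintro ⟨rfl, h⟩
        exact hij h
      rw [this, Finset.card_empty]
  show (Finset.univ.filter (fun s : Fin n =>
      (s : ℕ) ≤ l ∧ i ≤ ((u s : Fin n) : ℕ))).card = A1.card + _ + A3.card
  rw [hunion, Finset.card_union_of_disjoint hd2, Finset.card_union_of_disjoint hd1, hA2card]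

lemma Pre_congr {u u' : Equiv.Perm (Fin n)} {j : Fin n}
    (hagree : ∀ s : Fin n, (s : ℕ) < (j : ℕ) → u' s = u s) (i : ℕ) :
    Pre u' i j = Pre u i j := by
  unfold Pre
  congr 1
  apply Finset.filter_congr
  intro s _
  by_cases h : (s : ℕ) < (j : ℕ)
  · rw [hagree s h]
  · constructor
    · rintro ⟨h1, -⟩; exact absurd h1 h
    · rintro ⟨h1, -⟩; exact absurd h1 h

lemma Mid_mono (u : Equiv.Perm (Fin n)) {i i' : ℕ} (j : Fin n) (l : ℕ) (h : i ≤ i') :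
    Mid u i' j l ≤ Mid u i j l := by
  apply Finset.card_le_card
  intro s hs
  simp only [Finset.mem_filter, Finset.mem_univ, true_and] at hs ⊢
  exact ⟨hs.1, hs.2.1, by omega⟩

lemma Mid_self (u : Equiv.Perm (Fin n)) (i : ℕ) (j : Fin n) : Mid u i j (j : ℕ) = 0 := by
  unfold Mid
  rw [Finset.card_eq_zero]
  ext s
  simp only [Finset.mem_filter, Finset.mem_univ, true_and, Finset.notMem_empty, iff_false]
  rintro ⟨h1, h2, -⟩
  omega

end S12

namespace S12
open Finset
variable {n : ℕ}

lemma step_exists (w w' : Equiv.Perm (Fin n))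
    (hD : ∀ i l, Cnt w' i l ≤ Cnt w i l) (hne : w' ≠ w) :
    ∃ j m : Fin n, j < m ∧ w m < w j ∧
      (∀ i l, Cnt w' i l ≤ Cnt (w * Equiv.swap j m) i l) := by
  classical
  set Dif := Finset.univ.filter (fun s : Fin n => w' s ≠ w s) with hDif
  have hDne : Dif.Nonempty := by
    by_contra h
    rw [Finset.not_nonempty_iff_eq_empty] at h
    apply hne
    apply Equiv.ext
    intro s
    by_contra hs
    have : s ∈ Dif := by simp [hDif, hs]
    rw [h] at this
    exact absurd this (Finset.notMem_empty s)
  set j := Dif.min' hDne with hj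
  have hjmem : w' j ≠ w j := (Finset.mem_filter.1 (Dif.min'_mem hDne)).2
  have hagree : ∀ s : Fin n, (s : ℕ) < (j : ℕ) → w' s = w s := by
    intro s hs
    by_contra h
    have hmem : s ∈ Dif := by simp [hDif, h]
    have := Dif.min'_le s hmem
    rw [← hj] at this
    have : (j : ℕ) ≤ (s : ℕ) := this
    omega
  set a := ((w' j : Fin n) : ℕ) with ha
  set b := ((w j : Fin n) : ℕ) with hb
  have hab : a < b := by
    have hne_ab : a ≠ b := fun hc => hjmem (Fin.ext hc)
    by_contra hba
    have hba' : b < a := by omega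
    have h1 := hD a (j : ℕ)
    rw [Cnt_split w' a j (j : ℕ) le_rfl, Cnt_split w a j (j : ℕ) le_rfl,
      Pre_congr hagree, Mid_self, Mid_self, if_pos (le_refl a), if_neg (by omega)] at h1
    omega
  set E := ((Finset.Ioc a b) ×ˢ (Finset.Icc ((j : ℕ)) n)).filter
      (fun q : ℕ × ℕ => Cnt w' q.1 q.2 = Cnt w q.1 q.2) with hE
  by_cases hEne : E.Nonempty
  · -- E nonempty case
    have hlEne : (E.image Prod.snd).Nonempty := hEne.image _
    set lstar := (E.image Prod.snd).min' hlEne with hlstar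
    obtain ⟨q, hqE, hq2⟩ := Finset.mem_image.1 ((E.image Prod.snd).min'_mem hlEne)
    set istar := q.1 with histar
    have hqE' := hqE
    rw [hE, Finset.mem_filter, Finset.mem_product, Finset.mem_Ioc, Finset.mem_Icc] at hqE'
    obtain ⟨⟨⟨hai, hib⟩, hjl, hln⟩, heqC⟩ := hqE'
    rw [hq2] at hjl hln
    rw [← histar] at hai hib heqC
    rw [hq2] at heqC
    have hmin : ∀ i' l' : ℕ, (i', l') ∈ E → lstar ≤ l' := by
      intro i' l' hmem
      have : l' ∈ E.image Prod.snd := Finset.mem_image.2 ⟨(i', l'), hmem, rfl⟩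
      exact (E.image Prod.snd).min'_le l' this
    -- counting to find s₁
    have hDa := hD a lstar
    rw [Cnt_split w' a j lstar hjl, Cnt_split w a j lstar hjl, Pre_congr hagree,
      if_pos (le_refl a), if_pos (by omega)] at hDa
    have hmidA : Mid w' a j lstar ≤ Mid w a j lstar := by omega
    have heqC' := heqC
    rw [Cnt_split w' istar j lstar hjl, Cnt_split w istar j lstar hjl, Pre_congr hagree,
      if_neg (by omega), if_pos (by omega)] at heqC'
    have hmidI : Mid w' istar j lstar = Mid w istar j lstar + 1 := by omega
    have hmono : Mid w' istar j lstar ≤ Mid w' a j lstar := Mid_mono w' j lstar (by omega)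
    have hwa : Mid w istar j lstar + 1 ≤ Mid w a j lstar := by omega
    -- extract s₁
    set As := Finset.univ.filter (fun s : Fin n =>
      (j : ℕ) < (s : ℕ) ∧ (s : ℕ) ≤ lstar ∧ istar ≤ ((w s : Fin n) : ℕ)) with hAs
    set Bs := Finset.univ.filter (fun s : Fin n =>
      (j : ℕ) < (s : ℕ) ∧ (s : ℕ) ≤ lstar ∧ a ≤ ((w s : Fin n) : ℕ)) with hBs
    have hsub : As ⊆ Bs := by
      intro s hs
      simp only [hAs, hBs, Finset.mem_filter, Finset.mem_univ, true_and] at hs ⊢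
      exact ⟨hs.1, hs.2.1, by omega⟩
    have hcards : As.card + 1 ≤ Bs.card := hwa
    have hsdne : (Bs \ As).Nonempty := by
      rw [← Finset.card_pos, Finset.card_sdiff_of_subset hsub]
      omega
    obtain ⟨s₁, hs₁⟩ := hsdne
    rw [Finset.mem_sdiff] at hs₁
    obtain ⟨hs₁B, hs₁A⟩ := hs₁
    rw [hBs, Finset.mem_filter] at hs₁B
    obtain ⟨-, hjs₁, hs₁l, haw⟩ := hs₁B
    have hws₁ : ((w s₁ : Fin n) : ℕ) < istar := by
      by_contra hcon
      apply hs₁A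
      rw [hAs, Finset.mem_filter]
      exact ⟨Finset.mem_univ _, hjs₁, hs₁l, by omega⟩
    refine ⟨j, s₁, by rw [Fin.lt_def]; omega, by rw [Fin.lt_def]; omega, ?_⟩
    intro i l
    by_cases hc1 : l < (j : ℕ) ∨ ((s₁ : Fin n) : ℕ) ≤ l
    · rw [Cnt_swap_outside w j s₁ (by rw [Fin.lt_def]; omega) i l hc1]
      exact hD i l
    · push_neg at hc1
      obtain ⟨hc1a, hc1b⟩ := hc1
      by_cases hc2 : i ≤ ((w s₁ : Fin n) : ℕ) ∨ ((w j : Fin n) : ℕ) < i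
      · rw [Cnt_swap_inside_eq w j s₁ (by rw [Fin.lt_def]; omega)
          (by rw [Fin.lt_def]; omega) i l hc1a hc1b hc2]
        exact hD i l
      · push_neg at hc2
        obtain ⟨hc2a, hc2b⟩ := hc2
        have hkey := Cnt_swap_inside_lt w j s₁ (by rw [Fin.lt_def]; omega)
          (by rw [Fin.lt_def]; omega) i l hc1a hc1b hc2a hc2b
        have hstrict : Cnt w' i l < Cnt w i l := by
          rcases lt_or_eq_of_le (hD i l) with h | h
          · exact h
          · exfalso
            have hmemE : ((i, l) : ℕ × ℕ) ∈ E := by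
              rw [hE, Finset.mem_filter, Finset.mem_product, Finset.mem_Ioc, Finset.mem_Icc]
              have hs₁n : ((s₁ : Fin n) : ℕ) < n := s₁.isLt
              exact ⟨⟨⟨by omega, by omega⟩, by omega, by omega⟩, h⟩
            have := hmin i l hmemE
            omega
        omega
  · -- E empty case
    set m := w⁻¹ (w' j) with hm
    have hwm : w m = w' j := by
      rw [hm]
      exact Equiv.apply_symm_apply w (w' j)
    have hmj : m ≠ j := by
      intro hc
      apply hjmem
      rw [← hwm, hc]
    have hjm : j < m := by
      rcases lt_or_gt_of_ne hmj with h | h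
      · exfalso
        have hvm : (m : ℕ) < (j : ℕ) := h
        have h1 : w' m = w m := hagree m hvm
        have h2 : w' m = w' j := by rw [h1, hwm]
        exact hmj (w'.injective h2)
      · exact h
    have hv : w m < w j := by
      rw [Fin.lt_def, hwm]
      exact hab
    refine ⟨j, m, hjm, hv, ?_⟩
    intro i l
    by_cases hc1 : l < (j : ℕ) ∨ ((m : Fin n) : ℕ) ≤ l
    · rw [Cnt_swap_outside w j m hjm i l hc1]
      exact hD i l
    · push_neg at hc1
      obtain ⟨hc1a, hc1b⟩ := hc1
      by_cases hc2 : i ≤ ((w m : Fin n) : ℕ) ∨ ((w j : Fin n) : ℕ) < i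
      · rw [Cnt_swap_inside_eq w j m hjm hv i l hc1a hc1b hc2]
        exact hD i l
      · push_neg at hc2
        obtain ⟨hc2a, hc2b⟩ := hc2
        have hkey := Cnt_swap_inside_lt w j m hjm hv i l hc1a hc1b hc2a hc2b
        have hstrict : Cnt w' i l < Cnt w i l := by
          rcases lt_or_eq_of_le (hD i l) with h | h
          · exact h
          · exfalso
            apply hEne
            refine ⟨(i, l), ?_⟩
            rw [hE, Finset.mem_filter, Finset.mem_product, Finset.mem_Ioc, Finset.mem_Icc]
            have hwma : ((w m : Fin n) : ℕ) = a := by rw [hwm]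
            have hmn : ((m : Fin n) : ℕ) < n := m.isLt
            exact ⟨⟨⟨by omega, by omega⟩, by omega, by omega⟩, h⟩
        omega

lemma BruhatLE_refl (w : Equiv.Perm (Fin n)) : BruhatLE w w := by
  refine ⟨[], ?_, by simp, ?_⟩
  · intro t ht
    exact absurd ht List.not_mem_nil
  · intro k hk
    exact absurd hk (by simp)

lemma BruhatLE_cons {w w' : Equiv.Perm (Fin n)} {j m : Fin n} (hjm : j ≠ m)
    (hlen : len (w * Equiv.swap j m) < len w)
    (h : BruhatLE w' (w * Equiv.swap j m)) : BruhatLE w' w := by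
  obtain ⟨L, hsw, heqp, hdec⟩ := h
  refine ⟨Equiv.swap j m :: L, ?_, ?_, ?_⟩
  · intro t ht
    rcases List.mem_cons.1 ht with rfl | ht'
    · exact ⟨j, m, hjm, rfl⟩
    · exact hsw t ht'
  · rw [List.prod_cons, ← mul_assoc]
    exact heqp
  · intro k hk
    cases k with
    | zero =>
      simp only [List.take_succ_cons, List.take_zero, List.prod_cons, List.prod_nil,
        mul_one, List.take_zero]
      simpa using hlen
    | succ k' =>
      have hk' : k' < L.length := by
        simp only [List.length_cons] at hk
        omega
      have hstep := hdec k' hk'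
      simp only [List.take_succ_cons, List.prod_cons, ← mul_assoc]
      exact hstep

theorem D_to_Bruhat (w w' : Equiv.Perm (Fin n))
    (hD : ∀ i l, Cnt w' i l ≤ Cnt w i l) : BruhatLE w' w := by
  obtain ⟨N, hN⟩ : ∃ N, len w ≤ N := ⟨len w, le_rfl⟩
  induction N generalizing w w' with
  | zero =>
    by_cases h : w' = w
    · rw [h]; exact BruhatLE_refl w
    · obtain ⟨j, m, hjm, hv, hD'⟩ := step_exists w w' hD h
      have := len_swap_lt w j m hjm hv
      omega
  | succ N ih =>
    by_cases h : w' = w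
    · rw [h]; exact BruhatLE_refl w
    · obtain ⟨j, m, hjm, hv, hD'⟩ := step_exists w w' hD h
      have hlt := len_swap_lt w j m hjm hv
      exact BruhatLE_cons (ne_of_lt hjm) hlt (ih (w * Equiv.swap j m) w' hD' (by omega))

end S12


section Padic

lemma S12.zpow_mem_subring {F : Type*} [Field F] {O : Subring F} {x : F}
    (hx : x ∈ O) (hxi : x⁻¹ ∈ O) (m : ℤ) : x ^ m ∈ O := by
  obtain ⟨k, rfl | rfl⟩ := Int.eq_nat_or_neg m
  · rw [zpow_natCast]; exact pow_mem hx k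
  · rw [_root_.zpow_neg, zpow_natCast, ← inv_pow]
    exact pow_mem hxi k

lemma pinv_not_integral : ((p : F))⁻¹ ∉ oF p F := by
  intro hmem
  have hint : IsIntegral ℤ_[p] ((p : F)⁻¹) := hmem
  have h1 : ((p : F))⁻¹ = algebraMap ℚ_[p] F ((p : ℚ_[p])⁻¹) := by
    rw [map_inv₀, map_natCast]
  rw [h1] at hint
  have h2 : IsIntegral ℤ_[p] ((p : ℚ_[p])⁻¹) :=
    IsIntegral.tower_bot (algebraMap ℚ_[p] F).injective hint
  obtain ⟨y, hy⟩ := IsIntegrallyClosed.isIntegral_iff.1 h2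
  have hnorm : ‖algebraMap ℤ_[p] ℚ_[p] y‖ ≤ 1 := by
    have h3 : algebraMap ℤ_[p] ℚ_[p] y = (y : ℚ_[p]) := rfl
    rw [h3, ← PadicInt.norm_def]
    exact y.norm_le_one
  rw [hy] at hnorm
  have hp : ‖((p : ℚ_[p]))⁻¹‖ = (p : ℝ) := by
    rw [norm_inv, Padic.norm_p, inv_inv]
  rw [hp] at hnorm
  have hp2 : (2 : ℝ) ≤ (p : ℝ) := by
    have := (Fact.out : p.Prime).two_le
    exact_mod_cast this
  linarith

lemma pF_ne_zero : ((p : F)) ≠ 0 := by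
  haveI : CharZero F := charZero_of_injective_algebraMap (algebraMap ℚ_[p] F).injective
  exact_mod_cast (Fact.out : p.Prime).ne_zero

lemma mem_oF_iff (x : F) : x ∈ (integralClosure ℤ_[p] F).toSubring ↔ x ∈ oF p F :=
  Iff.rfl

lemma good_padic (π : F) (hπ : π ∈ oF p F)
    (hunif : ∀ x : F, x ≠ 0 →
      ∃ (m : ℤ) (u : F), u ∈ oF p F ∧ u⁻¹ ∈ oF p F ∧ x = u * π ^ m) :
    S12.Good ((integralClosure ℤ_[p] F).toSubring) π := by
  have hπ0 : π ≠ 0 := by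
    intro hzero
    obtain ⟨m, u, hu, hui, heq⟩ := hunif (p : F) (pF_ne_zero p F)
    rcases eq_or_ne m 0 with rfl | hm
    · rw [zpow_zero, mul_one] at heq
      apply pinv_not_integral p F
      rw [heq]
      exact hui
    · rw [hzero, _root_.zero_zpow m hm, mul_zero] at heq
      exact pF_ne_zero p F heq
  refine ⟨hπ0, hπ, ?_, hunif⟩
  intro hmem
  obtain ⟨m, u, hu, hui, heq⟩ := hunif (p : F) (pF_ne_zero p F)
  apply pinv_not_integral p F
  have hπmem : π ∈ (integralClosure ℤ_[p] F).toSubring := hπ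
  have h1 : ((p : F))⁻¹ = u⁻¹ * (π⁻¹) ^ m := by
    rw [heq, mul_inv, _root_.inv_zpow]
  rw [h1]
  exact mul_mem hui (S12.zpow_mem_subring hmem (by rwa [inv_inv]) m)

end Padic

namespace S12
variable {F : Type*} [Field F] {n : ℕ}
open Matrix

lemma diag_mul_entry {D A : Matrix (Fin n) (Fin n) F}
    (hD : ∀ i j : Fin n, i ≠ j → D i j = 0) (i j : Fin n) :
    (D * A) i j = D i i * A i j := by
  rw [Matrix.mul_apply]
  rw [Finset.sum_eq_single i]
  · intro b _ hb
    rw [hD i b (Ne.symm hb), zero_mul]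
  · intro hcon; exact absurd (Finset.mem_univ i) hcon

lemma mul_diag_entry {A D : Matrix (Fin n) (Fin n) F}
    (hD : ∀ i j : Fin n, i ≠ j → D i j = 0) (i j : Fin n) :
    (A * D) i j = A i j * D j j := by
  rw [Matrix.mul_apply]
  rw [Finset.sum_eq_single j]
  · intro b _ hb
    rw [hD b j hb, mul_zero]
  · intro hcon; exact absurd (Finset.mem_univ j) hcon

lemma diag_mulVec {D : Matrix (Fin n) (Fin n) F}
    (hD : ∀ i j : Fin n, i ≠ j → D i j = 0) (e : Fin n → F) :
    D.mulVec e = fun i => D i i * e i := by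
  funext i
  show (∑ j, D i j * e j) = D i i * e i
  rw [Finset.sum_eq_single i]
  · intro b _ hb
    rw [hD i b (Ne.symm hb), zero_mul]
  · intro hcon; exact absurd (Finset.mem_univ i) hcon

end S12

section
variable (p : ℕ) [Fact p.Prime] (F : Type) [Field F] [Algebra ℚ_[p] F]
  [FiniteDimensional ℚ_[p] F] [Algebra ℤ_[p] F] [IsScalarTower ℤ_[p] ℚ_[p] F]

set_option maxHeartbeats 1000000 in
/-- if `y ∈ U_w = R_w B`, `n t ∈ B₊ = N₀ T₊`, and
`x = t⁻¹ n⁻¹ y ∈ U_{w'} = R_{w'} B`, then `w' ⪯ w` in the strong Bruhat order. -/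
theorem stmt12 (n : ℕ) (π : F) (hπ : π ∈ oF p F)
    (hunif : ∀ x : F, x ≠ 0 →
      ∃ (m : ℤ) (u : F), u ∈ oF p F ∧ u⁻¹ ∈ oF p F ∧ x = u * π ^ m)
    (w w' : Equiv.Perm (Fin n)) (y : Matrix (Fin n) (Fin n) F)
    (nn t : GL (Fin n) F) (hnn : IsN0 p F nn) (ht : t ∈ Tplus p F n)
    (hy : y ∈ RwB p F π n w)
    (hx : (↑t⁻¹ : Matrix (Fin n) (Fin n) F) * (↑nn⁻¹ : Matrix (Fin n) (Fin n) F) * y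
            ∈ RwB p F π n w') :
    BruhatLE w' w := by
  classical
  set O : Subring F := (integralClosure ℤ_[p] F).toSubring with hOdef
  have hG : S12.Good O π := good_padic p F π hπ hunif
  set X : Matrix (Fin n) (Fin n) F :=
    (↑t⁻¹ : Matrix (Fin n) (Fin n) F) * (↑nn⁻¹ : Matrix (Fin n) (Fin n) F) * y with hXdef
  obtain ⟨r, bm, hr, hbm, hyeq⟩ := hy
  obtain ⟨r', b', hr', hb', hxeq⟩ := hx
  -- unit identities
  have hNN : (↑nn⁻¹ : Matrix (Fin n) (Fin n) F) * (↑nn : Matrix (Fin n) (Fin n) F) = 1 := by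
    rw [← Matrix.GeneralLinearGroup.coe_mul, inv_mul_cancel nn]; rfl
  have hNN' : (↑nn : Matrix (Fin n) (Fin n) F) * (↑nn⁻¹ : Matrix (Fin n) (Fin n) F) = 1 := by
    rw [← Matrix.GeneralLinearGroup.coe_mul, mul_inv_cancel nn]; rfl
  have hTT : (↑t : Matrix (Fin n) (Fin n) F) * (↑t⁻¹ : Matrix (Fin n) (Fin n) F) = 1 := by
    rw [← Matrix.GeneralLinearGroup.coe_mul, mul_inv_cancel t]; rfl
  have hTT' : (↑t⁻¹ : Matrix (Fin n) (Fin n) F) * (↑t : Matrix (Fin n) (Fin n) F) = 1 := by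
    rw [← Matrix.GeneralLinearGroup.coe_mul, inv_mul_cancel t]; rfl
  -- nn⁻¹ properties via the geometric series
  set Nmat : Matrix (Fin n) (Fin n) F := 1 - (↑nn : Matrix (Fin n) (Fin n) F) with hNmat
  have hNsu : ∀ i j : Fin n, ¬ i < j → Nmat i j = 0 := by
    intro i j hij
    rcases eq_or_ne i j with rfl | hne
    · rw [hNmat, Matrix.sub_apply, Matrix.one_apply_eq, hnn.1 i, sub_self]
    · have hji : j < i := lt_of_le_of_ne (not_lt.1 hij) (Ne.symm hne)
      rw [hNmat, Matrix.sub_apply, Matrix.one_apply_ne hne, hnn.2.1 i j hji, sub_zero]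
  have hgeom := S12.geom_inv hNsu
  have hNveq : (↑nn : Matrix (Fin n) (Fin n) F) = 1 - Nmat := by
    rw [hNmat, sub_sub_cancel]
  have hNvB : (↑nn : Matrix (Fin n) (Fin n) F) * (∑ m ∈ Finset.range n, Nmat ^ m) = 1 := by
    rw [hNveq]; exact hgeom.1
  have hNiveq : (↑nn⁻¹ : Matrix (Fin n) (Fin n) F) = ∑ m ∈ Finset.range n, Nmat ^ m := by
    calc (↑nn⁻¹ : Matrix (Fin n) (Fin n) F)
        = ↑nn⁻¹ * ((↑nn : Matrix (Fin n) (Fin n) F) * (∑ m ∈ Finset.range n, Nmat ^ m)) := by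
          rw [hNvB, Matrix.mul_one]
      _ = (↑nn⁻¹ * (↑nn : Matrix (Fin n) (Fin n) F)) * (∑ m ∈ Finset.range n, Nmat ^ m) := by
          rw [Matrix.mul_assoc]
      _ = ∑ m ∈ Finset.range n, Nmat ^ m := by rw [hNN, Matrix.one_mul]
  have hNivU : ∀ i j : Fin n, j < i → (↑nn⁻¹ : Matrix (Fin n) (Fin n) F) i j = 0 := by
    intro i j h
    rw [hNiveq]
    exact S12.geomB_upper hNsu i j h
  have hNivD : ∀ i : Fin n, (↑nn⁻¹ : Matrix (Fin n) (Fin n) F) i i = 1 := by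
    intro i
    rw [hNiveq]
    exact S12.geomB_diag hNsu i
  have hNO : ∀ i j : Fin n, Nmat i j ∈ O := by
    intro i j
    rw [hNmat, Matrix.sub_apply]
    refine sub_mem ?_ (hnn.2.2 i j)
    rw [Matrix.one_apply]
    split_ifs
    · exact one_mem O
    · exact zero_mem O
  have hNivO : ∀ i j : Fin n, (↑nn⁻¹ : Matrix (Fin n) (Fin n) F) i j ∈ S12.Ms O π 0 := by
    intro i j
    rw [hNiveq]
    exact S12.Ms_of_O (S12.geomB_O hNO i j)
  -- t diagonal properties
  have hTii0 : ∀ i : Fin n, (↑t : Matrix (Fin n) (Fin n) F) i i ≠ 0 := by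
    intro i
    have h1 : (↑t : Matrix (Fin n) (Fin n) F) i i * (↑t⁻¹ : Matrix (Fin n) (Fin n) F) i i = 1 := by
      rw [← S12.diag_mul_entry ht.1 i i, hTT, Matrix.one_apply_eq]
    exact left_ne_zero_of_mul_eq_one h1
  have hTivD : ∀ i : Fin n, (↑t⁻¹ : Matrix (Fin n) (Fin n) F) i i =
      ((↑t : Matrix (Fin n) (Fin n) F) i i)⁻¹ := by
    intro i
    have h1 : (↑t : Matrix (Fin n) (Fin n) F) i i * (↑t⁻¹ : Matrix (Fin n) (Fin n) F) i i = 1 := by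
      rw [← S12.diag_mul_entry ht.1 i i, hTT, Matrix.one_apply_eq]
    exact (inv_eq_of_mul_eq_one_right h1).symm
  have hTivoff : ∀ i j : Fin n, i ≠ j → (↑t⁻¹ : Matrix (Fin n) (Fin n) F) i j = 0 := by
    intro i j hij
    have h1 : (↑t : Matrix (Fin n) (Fin n) F) i i * (↑t⁻¹ : Matrix (Fin n) (Fin n) F) i j = 0 := by
      rw [← S12.diag_mul_entry ht.1 i j, hTT, Matrix.one_apply_ne hij]
    rcases mul_eq_zero.1 h1 with h | h
    · exact absurd h (hTii0 i)
    · exact h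
  -- valuation monotonicity of the diagonal of t
  have hvvmono : ∀ i j : Fin n, i ≤ j →
      S12.vv O π ((↑t : Matrix (Fin n) (Fin n) F) j j) ≤
        S12.vv O π ((↑t : Matrix (Fin n) (Fin n) F) i i) := by
    intro i j hij
    rcases eq_or_lt_of_le hij with rfl | hlt
    · exact le_refl _
    · set E : Matrix (Fin n) (Fin n) F := Matrix.single i j (1 : F) with hE
      have hji : j ≠ i := (ne_of_lt hlt).symm
      have hijne : i ≠ j := ne_of_lt hlt
      have hEE : E * E = 0 := by
        rw [hE]
        exact Matrix.single_mul_single_of_ne (c := (1 : F)) (i := i) (j := j) (k := i) (h := hji) (d := 1)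
      have hone : ((1 : Matrix (Fin n) (Fin n) F) + E) * (1 - E) = 1 := by
        have hexp : ((1 : Matrix (Fin n) (Fin n) F) + E) * (1 - E) = 1 - E + (E - E * E) := by
          noncomm_ring
        rw [hexp, hEE]
        abel
      have hone' : ((1 : Matrix (Fin n) (Fin n) F) - E) * (1 + E) = 1 := by
        have hexp : ((1 : Matrix (Fin n) (Fin n) F) - E) * (1 + E) = 1 + E - (E + E * E) := by
          noncomm_ring
        rw [hexp, hEE]
        abel
      set melem : GL (Fin n) F := ⟨1 + E, 1 - E, hone, hone'⟩ with hmelem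
      have hmcoe : (↑melem : Matrix (Fin n) (Fin n) F) = 1 + E := rfl
      have hmIs : IsN0 p F melem := by
        refine ⟨?_, ?_, ?_⟩
        · intro i'
          rw [hmcoe, Matrix.add_apply, Matrix.one_apply_eq, hE,
            Matrix.single_apply_of_ne _ _ _ _ _ (by
              rintro ⟨rfl, rfl⟩
              exact hijne rfl), add_zero]
        · intro i' j' hj'
          rw [hmcoe, Matrix.add_apply, Matrix.one_apply_ne (ne_of_gt hj'), hE,
            Matrix.single_apply_of_ne _ _ _ _ _ (by
              rintro ⟨rfl, rfl⟩
              exact absurd hlt (lt_asymm hj')), add_zero]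
        · intro i' j'
          rw [hmcoe, Matrix.add_apply]
          show (1 : Matrix (Fin n) (Fin n) F) i' j' + E i' j' ∈ integralClosure ℤ_[p] F
          refine add_mem ?_ ?_
          · rw [Matrix.one_apply]
            split_ifs
            · exact one_mem _
            · exact zero_mem _
          · rw [hE, Matrix.single, Matrix.of_apply]
            split_ifs
            · exact one_mem _
            · exact zero_mem _
      obtain ⟨-, -, hentries⟩ := ht.2 melem hmIs
      have hval := hentries i j
      have hcoe2 : (↑(t * melem * t⁻¹) : Matrix (Fin n) (Fin n) F) =
          (↑t : Matrix (Fin n) (Fin n) F) * ((1 : Matrix (Fin n) (Fin n) F) + E) *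
            (↑t⁻¹ : Matrix (Fin n) (Fin n) F) := by
        rw [Matrix.GeneralLinearGroup.coe_mul, Matrix.GeneralLinearGroup.coe_mul, hmcoe]
      rw [hcoe2] at hval
      have hcomp : ((↑t : Matrix (Fin n) (Fin n) F) * ((1 : Matrix (Fin n) (Fin n) F) + E) *
          (↑t⁻¹ : Matrix (Fin n) (Fin n) F)) i j =
          (↑t : Matrix (Fin n) (Fin n) F) i i *
            ((↑t : Matrix (Fin n) (Fin n) F) j j)⁻¹ := by
        rw [S12.mul_diag_entry hTivoff, S12.diag_mul_entry ht.1, Matrix.add_apply,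
          Matrix.one_apply_ne hijne, hE, Matrix.single_apply_same, zero_add,
          mul_one, hTivD j]
      rw [hcomp] at hval
      -- translate to valuations
      set q : F := (↑t : Matrix (Fin n) (Fin n) F) i i *
        ((↑t : Matrix (Fin n) (Fin n) F) j j)⁻¹ with hq
      have hq0 : q ≠ 0 := mul_ne_zero (hTii0 i) (inv_ne_zero (hTii0 j))
      have hq1 : q ∈ S12.Ms O π (S12.vv O π ((↑t : Matrix (Fin n) (Fin n) F) i i) -
          S12.vv O π ((↑t : Matrix (Fin n) (Fin n) F) j j)) := by
        rw [hq, mul_comm]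
        exact S12.Ms_inv_mul hG (hTii0 j) ((S12.vv_spec hG (hTii0 i)).1)
      have hq2 : q ∉ S12.Ms O π (S12.vv O π ((↑t : Matrix (Fin n) (Fin n) F) i i) -
          S12.vv O π ((↑t : Matrix (Fin n) (Fin n) F) j j) + 1) := by
        intro hqq
        have hTj : (↑t : Matrix (Fin n) (Fin n) F) j j ∈
            S12.Ms O π (S12.vv O π ((↑t : Matrix (Fin n) (Fin n) F) j j)) :=
          (S12.vv_spec hG (hTii0 j)).1
        have hmul := S12.Ms_mul hG hTj hqq
        have heqq : (↑t : Matrix (Fin n) (Fin n) F) j j * q =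
            (↑t : Matrix (Fin n) (Fin n) F) i i := by
          rw [hq, mul_comm ((↑t : Matrix (Fin n) (Fin n) F) i i)
            (((↑t : Matrix (Fin n) (Fin n) F) j j)⁻¹), ← mul_assoc,
            mul_inv_cancel₀ (hTii0 j), one_mul]
        rw [heqq, show S12.vv O π ((↑t : Matrix (Fin n) (Fin n) F) j j) +
            (S12.vv O π ((↑t : Matrix (Fin n) (Fin n) F) i i) -
              S12.vv O π ((↑t : Matrix (Fin n) (Fin n) F) j j) + 1) =
            S12.vv O π ((↑t : Matrix (Fin n) (Fin n) F) i i) + 1 from by ring] at hmul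
        exact (S12.vv_spec hG (hTii0 i)).2 hmul
      have hqvv := S12.vv_eq hG hq1 hq2
      have hqO : q ∈ S12.Ms O π 0 := S12.Ms_of_O hval
      have := (S12.mem_Ms_iff hG hq0).1 hqO
      omega
  -- translations of the Rw conditions
  have hr1 : ∀ lx : Fin n, r (w lx) lx = 1 :=
    fun lx => (hr (w lx) lx).1 (Equiv.symm_apply_apply w lx)
  have hr0 : ∀ i j : Fin n, w⁻¹ i < j → r i j = 0 := fun i j h => (hr i j).2.1 h
  have hrO : ∀ i j : Fin n, j < w⁻¹ i → i < w j → r i j ∈ S12.Ms O π 0 :=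
    fun i j h1 h2 => S12.Ms_of_O ((hr i j).2.2.1 h1 h2)
  have hrP : ∀ i j : Fin n, j < w⁻¹ i → w j < i → r i j ∈ S12.Ms O π 1 := by
    intro i j h1 h2
    obtain ⟨c, hc, hcx⟩ := (hr i j).2.2.2 h1 h2
    exact ⟨c, hc, by rw [hcx, zpow_one]⟩
  have hr'1 : ∀ lx : Fin n, r' (w' lx) lx = 1 :=
    fun lx => (hr' (w' lx) lx).1 (Equiv.symm_apply_apply w' lx)
  have hr'0 : ∀ i j : Fin n, w'⁻¹ i < j → r' i j = 0 := fun i j h => (hr' i j).2.1 h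
  have hr'O : ∀ i j : Fin n, j < w'⁻¹ i → i < w' j → r' i j ∈ S12.Ms O π 0 :=
    fun i j h1 h2 => S12.Ms_of_O ((hr' i j).2.2.1 h1 h2)
  have hr'P : ∀ i j : Fin n, j < w'⁻¹ i → w' j < i → r' i j ∈ S12.Ms O π 1 := by
    intro i j h1 h2
    obtain ⟨c, hc, hcx⟩ := (hr' i j).2.2.2 h1 h2
    exact ⟨c, hc, by rw [hcx, zpow_one]⟩
  -- inverse of b' and basic products
  obtain ⟨b'inv, hb'inv1, hb'invU⟩ := S12.borel_inv hb'.1 hb'.2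
  have hXb : X * b'inv = r' := by
    rw [hxeq, Matrix.mul_assoc, hb'inv1, Matrix.mul_one]
  have hyX : (↑nn : Matrix (Fin n) (Fin n) F) * ((↑t : Matrix (Fin n) (Fin n) F) * X) = y := by
    rw [hXdef]
    have h1 : (↑t : Matrix (Fin n) (Fin n) F) *
        ((↑t⁻¹ : Matrix (Fin n) (Fin n) F) * (↑nn⁻¹ : Matrix (Fin n) (Fin n) F) * y) =
        (↑nn⁻¹ : Matrix (Fin n) (Fin n) F) * y := by
      rw [← Matrix.mul_assoc, ← Matrix.mul_assoc, hTT, Matrix.one_mul]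
    rw [h1, ← Matrix.mul_assoc, hNN', Matrix.one_mul]
  have hXmul : ∀ v : Fin n → F, X.mulVec (b'inv.mulVec v) = r'.mulVec v := by
    intro v
    rw [Matrix.mulVec_mulVec, hXb]
  -- the rank inequalities
  have hD : ∀ i l : ℕ, S12.Cnt w' i l ≤ S12.Cnt w i l := by
    intro i l
    set T := Finset.univ.filter
      (fun s : Fin n => (s : ℕ) ≤ l ∧ i ≤ ((w' s : Fin n) : ℕ)) with hT
    set S : Finset ℕ := (Finset.univ.filter
      (fun s : Fin n => (s : ℕ) ≤ l ∧ i ≤ ((w s : Fin n) : ℕ))).image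
        (fun s => ((w s : Fin n) : ℕ)) with hS
    have hkk : S12.Cnt w' i l = T.card := rfl
    have hcard2 : S.card ≤ S12.Cnt w i l := Finset.card_image_le
    rw [hkk]
    set emb : Fin T.card → Fin n :=
      fun idx => ((T.orderIsoOfFin rfl idx : {x // x ∈ T}) : Fin n) with hemb
    have hembmem : ∀ idx, emb idx ∈ T := fun idx => (T.orderIsoOfFin rfl idx).2
    have hembinj : Function.Injective emb := by
      intro x1 x2 hxy
      exact (T.orderIsoOfFin rfl).injective (Subtype.ext hxy)
    set efun : Fin T.card → (Fin n → F) := fun idx =>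
      (↑nn : Matrix (Fin n) (Fin n) F).mulVec
        ((↑t : Matrix (Fin n) (Fin n) F).mulVec
          (X.mulVec (b'inv.mulVec ((Pi.single (emb idx) 1 : Fin n → F))))) with hefun
    refine le_trans (S12.lemE hG T.card S efun ?_) hcard2
    intro a ha
    set atil : Fin n → F := ∑ idx, a idx • (Pi.single (emb idx) 1 : Fin n → F) with hatil
    have hatilval : ∀ idx, atil (emb idx) = a idx := by
      intro idx
      rw [hatil, Finset.sum_apply]
      rw [Finset.sum_eq_single idx]
      · simp
      · intro b2 _ hbne
        have hne2 : emb idx ≠ emb b2 := fun hc => hbne (hembinj hc.symm)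
        simp [Pi.single_eq_of_ne hne2]
      · intro hcon; exact absurd (Finset.mem_univ idx) hcon
    have hatilsupp : ∀ s, atil s ≠ 0 → s ∈ T := by
      intro s hs
      by_contra hsT
      apply hs
      rw [hatil, Finset.sum_apply]
      apply Finset.sum_eq_zero
      intro idx _
      have hne2 : s ≠ emb idx := fun hc => hsT (hc ▸ hembmem idx)
      simp [Pi.single_eq_of_ne hne2]
    have hatilne : atil ≠ 0 := by
      obtain ⟨idx, hidx⟩ : ∃ idx, a idx ≠ 0 := by
        by_contra hcon; push_neg at hcon; exact ha (funext hcon)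
      intro hc
      apply hidx
      rw [← hatilval idx, hc]
      rfl
    set d : Fin n → F := r'.mulVec atil with hd
    set L : (Fin n → F) →ₗ[F] (Fin n → F) :=
      (Matrix.mulVecLin (↑nn : Matrix (Fin n) (Fin n) F)).comp
        ((Matrix.mulVecLin (↑t : Matrix (Fin n) (Fin n) F)).comp
          (Matrix.mulVecLin r')) with hL
    have hLefun : ∀ idx, efun idx = L ((Pi.single (emb idx) 1 : Fin n → F)) := by
      intro idx
      rw [hefun]
      show (↑nn : Matrix (Fin n) (Fin n) F).mulVec
        ((↑t : Matrix (Fin n) (Fin n) F).mulVec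
          (X.mulVec (b'inv.mulVec ((Pi.single (emb idx) 1 : Fin n → F))))) = _
      rw [hXmul]
      simp [hL, Matrix.mulVecLin_apply]
    have hsum : (∑ idx, a idx • efun idx) =
        (↑nn : Matrix (Fin n) (Fin n) F).mulVec
          ((↑t : Matrix (Fin n) (Fin n) F).mulVec d) := by
      calc (∑ idx, a idx • efun idx) = ∑ idx, a idx • L ((Pi.single (emb idx) 1 : Fin n → F)) := by
            apply Finset.sum_congr rfl
            intro idx _
            rw [hLefun]
        _ = ∑ idx, L (a idx • (Pi.single (emb idx) 1 : Fin n → F)) := by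
            apply Finset.sum_congr rfl
            intro idx _
            exact (_root_.map_smul L (a idx) _).symm
        _ = L atil := by rw [hatil, map_sum]
        _ = _ := by simp [hL, Matrix.mulVecLin_apply, hd]
    obtain ⟨ls, hlsT, hdne, hdpiv⟩ :=
      S12.lemA hG w' hr'1 hr'0 hr'O hr'P T atil hatilsupp hatilne
    rw [← hd] at hdne hdpiv
    have hlsT' := hlsT
    rw [hT, Finset.mem_filter] at hlsT'
    obtain ⟨-, hlsl, hlsi⟩ := hlsT'
    set Ed : Fin n → F := (↑nn : Matrix (Fin n) (Fin n) F).mulVec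
      ((↑t : Matrix (Fin n) (Fin n) F).mulVec d) with hEd
    have hrec : (↑t⁻¹ : Matrix (Fin n) (Fin n) F).mulVec
        ((↑nn⁻¹ : Matrix (Fin n) (Fin n) F).mulVec Ed) = d := by
      rw [hEd, Matrix.mulVec_mulVec ((↑t : Matrix (Fin n) (Fin n) F).mulVec d)
        (↑nn⁻¹ : Matrix (Fin n) (Fin n) F) (↑nn : Matrix (Fin n) (Fin n) F), hNN,
        Matrix.one_mulVec, Matrix.mulVec_mulVec d (↑t⁻¹ : Matrix (Fin n) (Fin n) F)
        (↑t : Matrix (Fin n) (Fin n) F), hTT', Matrix.one_mulVec]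
    have hEdne : Ed ≠ 0 := by
      intro hc
      apply hdne
      rw [← hrec, hc, Matrix.mulVec_zero, Matrix.mulVec_zero]
    have hE2ne : (↑nn⁻¹ : Matrix (Fin n) (Fin n) F).mulVec Ed ≠ 0 := by
      intro hc
      apply hdne
      rw [← hrec, hc, Matrix.mulVec_zero]
    have hC1 := S12.lemC1 hG hNivU hNivD hNivO hEdne
    have hC2 := S12.lemC2 hG hTii0 hvvmono hE2ne
    have hdform : d = fun i2 => (((↑t : Matrix (Fin n) (Fin n) F) i2 i2))⁻¹ *
        ((↑nn⁻¹ : Matrix (Fin n) (Fin n) F).mulVec Ed) i2 := by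
      rw [← hrec, S12.diag_mulVec hTivoff]
      funext i2
      rw [hTivD i2]
    have hchain : S12.pivN O π d ≤ S12.pivN O π Ed := by
      have h1 : S12.pivN O π d ≤
          S12.pivN O π ((↑nn⁻¹ : Matrix (Fin n) (Fin n) F).mulVec Ed) := by
        rw [hdform]
        exact hC2
      rw [hC1.2] at h1
      exact h1
    -- y-side
    have hatil0 : ∀ s : Fin n, l < (s : ℕ) → atil s = 0 := by
      intro s hs
      by_contra hne2
      have hmem2 := hatilsupp s hne2
      rw [hT, Finset.mem_filter] at hmem2
      omega
    have hc₀supp := S12.mulVec_suppLE hb'invU hatil0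
    have hEdy : Ed = y.mulVec (b'inv.mulVec atil) := by
      rw [hEd, hd, ← hXmul atil, Matrix.mulVec_mulVec, Matrix.mulVec_mulVec,
        Matrix.mul_assoc, hyX]
    set c₂ : Fin n → F := bm.mulVec (b'inv.mulVec atil) with hc₂def
    have hEdr : Ed = r.mulVec c₂ := by
      rw [hEdy, hyeq, ← Matrix.mulVec_mulVec]
    have hc₂supp : ∀ s : Fin n, l < (s : ℕ) → c₂ s = 0 := S12.mulVec_suppLE hbm.1 hc₀supp
    have hc₂ne : c₂ ≠ 0 := by
      intro hc
      apply hEdne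
      rw [hEdr, hc, Matrix.mulVec_zero]
    obtain ⟨l₂, hl₂T, hl₂ne, hl₂piv⟩ := S12.lemA hG w hr1 hr0 hrO hrP
      (Finset.univ.filter (fun s : Fin n => (s : ℕ) ≤ l)) c₂
      (fun s hs => Finset.mem_filter.2 ⟨Finset.mem_univ s, by
        by_contra h2
        push_neg at h2
        exact hs (hc₂supp s h2)⟩) hc₂ne
    rw [← hEdr] at hl₂piv
    have hl₂l : (l₂ : ℕ) ≤ l := (Finset.mem_filter.1 hl₂T).2
    refine ⟨?_, ?_⟩
    · rw [hsum]
      exact hEdne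
    · rw [hsum]
      show S12.pivN O π Ed ∈ S
      rw [hS]
      apply Finset.mem_image.2
      refine ⟨l₂, ?_, ?_⟩
      · simp only [Finset.mem_filter, Finset.mem_univ, true_and]
        exact ⟨hl₂l, by omega⟩
      · exact hl₂piv.symm
  exact S12.D_to_Bruhat w w' hD

end
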